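/- Let k ≥ 0 and let G be a graph. Then there exist l with 0 ≤ l ≤ k and pairwise distinct edges e1, …, e_{2l} ∈ E^G such that the graph G^{×ē}, obtained by successively crossing e1 with e2, e3 with e4, …, e_{2l−1} with e_{2l}, is planar, if and only if G has a drawing with at most k crossings in which every edge is involved in at most one crossing. -/

import Mathlib

lemma sym2_out_eq {α : Type} (s : Sym2 α) : s = s((Quot.out s).1, (Quot.out s).2) := by
  exact (Quot.out_eq s).symm

lemma sym2_out_fst_mem {α : Type} (s : Sym2 α) : (Quot.out s).1 ∈ s := by
  set p := Quot.out s with hp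
  rw [sym2_out_eq s, ← hp]
  exact Sym2.mem_mk_left _ _

lemma sym2_out_snd_mem {α : Type} (s : Sym2 α) : (Quot.out s).2 ∈ s := by
  set p := Quot.out s with hp
  rw [sym2_out_eq s, ← hp]
  exact Sym2.mem_mk_right _ _

lemma sym2_out_ne {α : Type} (s : Sym2 α) (h : ¬ s.IsDiag) : (Quot.out s).1 ≠ (Quot.out s).2 := by
  intro he
  exact h (by rw [sym2_out_eq s]; exact Sym2.mk_isDiag_iff.mpr he)

/-! ### Basic multigraphs -/

/-- A multigraph: undirected, loop-free, possibly with multiple (parallel) edges.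
Each edge is assigned its unordered pair of (distinct) endpoints. -/
structure Multigraph where
  V : Type
  E : Type
  ends : E → Sym2 V
  loopless : ∀ e : E, ¬ (ends e).IsDiag

namespace Multigraph

/-- Walks in a multigraph. -/
inductive Walk (G : Multigraph) : G.V → G.V → Type where
  | nil (v : G.V) : Walk G v v
  | cons {u v w : G.V} (e : G.E) (he : G.ends e = s(u, v)) (p : Walk G v w) : Walk G u w

namespace Walk

variable {G : Multigraph}

/-- The list of vertices visited by a walk (in order, including both endpoints). -/
def support : ∀ {u v : G.V}, G.Walk u v → List G.V
  | u, _, .nil _ => [u]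
  | u, _, .cons _ _ p => u :: p.support

/-- The list of edges traversed by a walk. -/
def edgeList : ∀ {u v : G.V}, G.Walk u v → List G.E
  | _, _, .nil _ => []
  | _, _, .cons e _ p => e :: p.edgeList

lemma start_mem_support : ∀ {u v : G.V} (w : G.Walk u v), u ∈ w.support
  | _, _, .nil _ => List.mem_singleton_self _
  | _, _, .cons _ _ _ => List.mem_cons_self

lemma end_mem_support : ∀ {u v : G.V} (w : G.Walk u v), v ∈ w.support
  | _, _, .nil _ => List.mem_singleton_self _
  | _, _, .cons _ _ p => List.mem_cons_of_mem _ (end_mem_support p)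

lemma mem_support_of_mem_edgeList :
    ∀ {u v : G.V} (w : G.Walk u v) (f : G.E) (x : G.V),
      f ∈ w.edgeList → x ∈ G.ends f → x ∈ w.support
  | _, _, .nil _, f, x, hf, _ => by simp [edgeList] at hf
  | u, v, .cons e he p, f, x, hf, hx => by
      rcases List.mem_cons.mp hf with h | h
      · subst h
        rw [he, Sym2.mem_iff] at hx
        rcases hx with rfl | rfl
        · exact start_mem_support _
        · exact List.mem_cons_of_mem _ (start_mem_support p)
      · exact List.mem_cons_of_mem _ (mem_support_of_mem_edgeList p f x h hx)

/-- A walk is a path if it visits no vertex twice. -/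
def IsPath {u v : G.V} (w : G.Walk u v) : Prop := w.support.Nodup

/-- A closed walk is a cycle if it is nontrivial, repeats no edge,
and repeats no vertex except the first = last one. -/
def IsCycleW {u : G.V} (w : G.Walk u u) : Prop :=
  w.edgeList ≠ [] ∧ w.edgeList.Nodup ∧ w.support.tail.Nodup

end Walk

/-! ### Subgraphs -/

/-- A subgraph of `G`, given by a set of vertices and a set of edges all of whose
endpoints belong to the vertex set. -/
structure Subgraph (G : Multigraph) where
  verts : Set G.V
  edges : Set G.E
  closed : ∀ e ∈ edges, ∀ v ∈ G.ends e, v ∈ verts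

namespace Subgraph

variable {G : Multigraph}

/-- The subgraph consisting of all of `G`. -/
def top (G : Multigraph) : G.Subgraph where
  verts := Set.univ
  edges := Set.univ
  closed := fun _ _ _ _ => Set.mem_univ _

/-- Union of two subgraphs. -/
def union (A B : G.Subgraph) : G.Subgraph where
  verts := A.verts ∪ B.verts
  edges := A.edges ∪ B.edges
  closed := by
    rintro e (he | he) v hv
    · exact Or.inl (A.closed e he v hv)
    · exact Or.inr (B.closed e he v hv)

/-- Union of a set of subgraphs. -/
def sUnion (𝒮 : Set G.Subgraph) : G.Subgraph where
  verts := ⋃ S ∈ 𝒮, S.verts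
  edges := ⋃ S ∈ 𝒮, S.edges
  closed := by
    intro e he v hv
    simp only [Set.mem_iUnion] at he ⊢
    obtain ⟨S, hS, heS⟩ := he
    exact ⟨S, hS, S.closed e heS v hv⟩

/-- Delete a set of vertices (and all edges touching them) from a subgraph. -/
def delete (S : G.Subgraph) (A : Set G.V) : G.Subgraph where
  verts := S.verts \ A
  edges := {e ∈ S.edges | ∀ v ∈ G.ends e, v ∉ A}
  closed := fun e he v hv => ⟨S.closed e he.1 v hv, he.2 v hv⟩

/-- The subgraph, viewed as a graph in its own right. -/
def toGraph (S : G.Subgraph) : Multigraph where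
  V := {v : G.V // v ∈ S.verts}
  E := {e : G.E // e ∈ S.edges}
  ends := fun e => (G.ends e.val).attachWith (fun v hv => S.closed e.val e.2 v hv)
  loopless := by
    intro e he
    have h2 := Sym2.IsDiag.map (f := Subtype.val) he
    rw [Sym2.attachWith_map_subtypeVal] at h2
    exact G.loopless e.val h2

lemma toGraph_ends {S : G.Subgraph} (e : S.toGraph.E) {v w : G.V}
    (hvw : G.ends e.val = s(v, w)) (hv : v ∈ S.verts) (hw : w ∈ S.verts) :
    S.toGraph.ends e = s((⟨v, hv⟩ : {v : G.V // v ∈ S.verts}), ⟨w, hw⟩) := by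
  apply Sym2.map.injective Subtype.val_injective
  show Sym2.map Subtype.val ((G.ends e.val).attachWith _) = _
  rw [Sym2.attachWith_map_subtypeVal, Sym2.map_pair_eq, hvw]

lemma toGraph_mem_ends {S : G.Subgraph} (e : S.toGraph.E) (x : S.toGraph.V) :
    x ∈ S.toGraph.ends e ↔ x.val ∈ G.ends e.val := by
  constructor
  · intro hx
    have h2 : x.val ∈ Sym2.map Subtype.val (S.toGraph.ends e) :=
      Sym2.mem_map.mpr ⟨x, hx, rfl⟩
    rwa [show Sym2.map Subtype.val (S.toGraph.ends e) = G.ends e.val from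
      Sym2.attachWith_map_subtypeVal _] at h2
  · intro hx
    have h2 : x.val ∈ Sym2.map Subtype.val (S.toGraph.ends e) := by
      rwa [show Sym2.map Subtype.val (S.toGraph.ends e) = G.ends e.val from
        Sym2.attachWith_map_subtypeVal _]
    obtain ⟨y, hy, hyx⟩ := Sym2.mem_map.mp h2
    rwa [show y = x from Subtype.ext hyx] at hy

/-- Reachability within a subgraph: a walk of `G` all of whose vertices and
edges belong to the subgraph. -/
def Reach (S : G.Subgraph) (u v : G.V) : Prop :=
  ∃ w : G.Walk u v, (∀ x ∈ w.support, x ∈ S.verts) ∧ ∀ e ∈ w.edgeList, e ∈ S.edges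

/-- A subgraph is connected if it is nonempty and any two of its vertices are
joined by a walk inside it. -/
def Connected (S : G.Subgraph) : Prop :=
  S.verts.Nonempty ∧ ∀ u ∈ S.verts, ∀ v ∈ S.verts, S.Reach u v

end Subgraph

/-- The induced subgraph on a vertex set `A`. -/
def induce (G : Multigraph) (A : Set G.V) : G.Subgraph where
  verts := A
  edges := {e | ∀ v ∈ G.ends e, v ∈ A}
  closed := fun _ he v hv => he v hv

/-- `G ∖ A`: delete the vertices in `A`, keeping only edges with no endpoint in `A`. -/
def deleteVerts (G : Multigraph) (A : Set G.V) : G.Subgraph :=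
  G.induce Aᶜ

end Multigraph
/-! ### Drawings in the plane -/

/-- A drawing of a graph in the plane.  Every vertex is assigned a point and every
edge a simple curve (given by an injective continuous parametrization on `[0,1]`)
joining the images of its endpoints; distinct vertices get distinct points;
distinct edge curves meet in at most one interior point; no curve passes through the
image of a vertex other than its endpoints; and no point which is not the image of a
vertex lies on more than two edge curves. -/
structure Drawing (G : Multigraph) where
  vpos : G.V → ℝ × ℝ
  par : G.E → ℝ → ℝ × ℝ
  par_cont : ∀ e, ContinuousOn (par e) (Set.Icc 0 1)
  par_inj : ∀ e, Set.InjOn (par e) (Set.Icc 0 1)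
  ends_match : ∀ e, ∃ v w : G.V, G.ends e = s(v, w) ∧ par e 0 = vpos v ∧ par e 1 = vpos w
  vpos_inj : Function.Injective vpos
  arcs_inter : ∀ e f : G.E, e ≠ f →
    Set.Subsingleton (par e '' Set.Ioo 0 1 ∩ par f '' Set.Ioo 0 1)
  vertex_on_arc : ∀ (e : G.E) (v : G.V), vpos v ∈ par e '' Set.Icc 0 1 → v ∈ G.ends e
  at_most_two : ∀ x : ℝ × ℝ, x ∉ Set.range vpos →
    ∀ e₁ e₂ e₃ : G.E, x ∈ par e₁ '' Set.Icc 0 1 → x ∈ par e₂ '' Set.Icc 0 1 →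
      x ∈ par e₃ '' Set.Icc 0 1 → e₁ = e₂ ∨ e₁ = e₃ ∨ e₂ = e₃

namespace Drawing

variable {G : Multigraph}

/-- The curve drawn for the edge `e`. -/
def arc (Δ : Drawing G) (e : G.E) : Set (ℝ × ℝ) := Δ.par e '' Set.Icc 0 1

/-- A crossing of a drawing: a point which is not the image of a vertex and lies on
two distinct edge curves. -/
def IsCrossing (Δ : Drawing G) (x : ℝ × ℝ) : Prop :=
  x ∉ Set.range Δ.vpos ∧ ∃ e f : G.E, e ≠ f ∧ x ∈ Δ.arc e ∧ x ∈ Δ.arc f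

/-- The set of crossings of a drawing. -/
def crossings (Δ : Drawing G) : Set (ℝ × ℝ) := {x | Δ.IsCrossing x}

/-- The drawing has at most `k` crossings. -/
def CrossingsAtMost (Δ : Drawing G) (k : ℕ) : Prop :=
  Δ.crossings.Finite ∧ Δ.crossings.ncard ≤ k

/-- The edge `e` is involved in some crossing of the drawing. -/
def Involved (Δ : Drawing G) (e : G.E) : Prop :=
  ∃ x : ℝ × ℝ, Δ.IsCrossing x ∧ x ∈ Δ.arc e

/-- An `l`-good drawing with respect to a set `F` of forbidden edges:
at most `l` crossings, and no forbidden edge is involved in any crossing. -/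
def IsGood (Δ : Drawing G) (l : ℕ) (F : Set G.E) : Prop :=
  Δ.CrossingsAtMost l ∧ ∀ e ∈ F, ¬ Δ.Involved e

/-- The image of a subgraph under a drawing: all vertex points and edge curves of
the subgraph. -/
def subImage (Δ : Drawing G) (S : G.Subgraph) : Set (ℝ × ℝ) :=
  Δ.vpos '' S.verts ∪ ⋃ e ∈ S.edges, Δ.arc e

/-- The restriction of a drawing to a subgraph. -/
def restrict (Δ : Drawing G) (S : G.Subgraph) : Drawing S.toGraph where
  vpos := fun v => Δ.vpos v.val
  par := fun e => Δ.par e.val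
  par_cont := fun e => Δ.par_cont e.val
  par_inj := fun e => Δ.par_inj e.val
  ends_match := by
    intro e
    obtain ⟨v, w, hvw, h0, h1⟩ := Δ.ends_match e.val
    have hv : v ∈ S.verts := S.closed e.val e.2 v (by rw [hvw]; exact Sym2.mem_mk_left _ _)
    have hw : w ∈ S.verts := S.closed e.val e.2 w (by rw [hvw]; exact Sym2.mem_mk_right _ _)
    exact ⟨⟨v, hv⟩, ⟨w, hw⟩, Multigraph.Subgraph.toGraph_ends e hvw hv hw, h0, h1⟩
  vpos_inj := fun v w h => Subtype.ext (Δ.vpos_inj h)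
  arcs_inter := fun e f hef =>
    Δ.arcs_inter e.val f.val (fun h => hef (Subtype.ext h))
  vertex_on_arc := by
    intro e v hv
    exact (Multigraph.Subgraph.toGraph_mem_ends e v).mpr (Δ.vertex_on_arc e.val v.val hv)
  at_most_two := by
    intro x hx e₁ e₂ e₃ h₁ h₂ h₃
    by_cases hxr : x ∈ Set.range Δ.vpos
    · obtain ⟨u, hu⟩ := hxr
      have hu1 : u ∈ G.ends e₁.val := Δ.vertex_on_arc e₁.val u (by rw [hu]; exact h₁)
      have huS : u ∈ S.verts := S.closed e₁.val e₁.2 u hu1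
      exact absurd ⟨⟨u, huS⟩, hu⟩ hx
    · rcases Δ.at_most_two x hxr e₁.val e₂.val e₃.val h₁ h₂ h₃ with h | h | h
      · exact Or.inl (Subtype.ext h)
      · exact Or.inr (Or.inl (Subtype.ext h))
      · exact Or.inr (Or.inr (Subtype.ext h))

end Drawing

namespace Multigraph

/-- A graph is planar if it has a drawing without crossings. -/
def IsPlanar (G : Multigraph) : Prop := ∃ Δ : Drawing G, Δ.crossings = ∅

/-- The crossing number of `G` is at most `k`. -/
def CrossingNumberLE (G : Multigraph) (k : ℕ) : Prop :=
  ∃ Δ : Drawing G, Δ.CrossingsAtMost k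

end Multigraph

/-- A simple closed curve in the plane: a continuous injective image of a circle. -/
def IsSimpleClosedCurve (s : Set (ℝ × ℝ)) : Prop :=
  ∃ f : AddCircle (1 : ℝ) → ℝ × ℝ, Continuous f ∧ Function.Injective f ∧ Set.range f = s
/-! ### H-components -/

namespace Multigraph

variable {G : Multigraph}

/-- The subgraph consisting of a single edge together with its endpoints. -/
def edgeComp (G : Multigraph) (e : G.E) : G.Subgraph where
  verts := {v | v ∈ G.ends e}
  edges := {e}
  closed := by
    rintro f rfl v hv
    exact hv

/-- For a subgraph `H` of `G` and a vertex `u ∉ H`, the `H`-component of `G`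
determined by `u`: the connected component of `G ∖ H` containing `u`, together with
all edges joining it to `H` and their endpoints in `H`. -/
def attachComp (G : Multigraph) (H : G.Subgraph) (u : G.V) : G.Subgraph where
  verts := {v | (G.deleteVerts H.verts).Reach u v} ∪
    {v | v ∈ H.verts ∧ ∃ (e : G.E) (w : G.V), G.ends e = s(w, v) ∧
      (G.deleteVerts H.verts).Reach u w}
  edges := {e | e ∈ (G.deleteVerts H.verts).edges ∧
      ∀ v ∈ G.ends e, (G.deleteVerts H.verts).Reach u v} ∪
    {e | ∃ (w v : G.V), G.ends e = s(w, v) ∧ (G.deleteVerts H.verts).Reach u w ∧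
      v ∈ H.verts}
  closed := by
    rintro e (⟨-, he⟩ | ⟨w, v, hwv, hw, hv⟩) x hx
    · exact Or.inl (he x hx)
    · rw [hwv, Sym2.mem_iff] at hx
      rcases hx with rfl | rfl
      · exact Or.inl hw
      · exact Or.inr ⟨hv, e, w, hwv, hw⟩

/-- `C` is an `H`-component of `G`: either a connected component of `G ∖ H` together
with the edges joining it to `H` and their endpoints in `H`, or a single edge of
`G` outside `H` with both endpoints in `H`, together with its endpoints. -/
def IsHComp (G : Multigraph) (H C : G.Subgraph) : Prop :=
  (∃ u : G.V, u ∉ H.verts ∧ C = G.attachComp H u) ∨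
  (∃ e : G.E, e ∉ H.edges ∧ (∀ v ∈ G.ends e, v ∈ H.verts) ∧ C = G.edgeComp e)

/-! ### Graph embeddings (subgraph copies) -/

/-- An embedding of the graph `H` into the graph `G`: injective maps on vertices and
edges that respect endpoints.  The image is a subgraph of `G` isomorphic to `H`. -/
structure Emb (H G : Multigraph) where
  vmap : H.V → G.V
  emap : H.E → G.E
  vmap_inj : Function.Injective vmap
  emap_inj : Function.Injective emap
  ends_map : ∀ e : H.E, G.ends (emap e) = (H.ends e).map vmap

end Multigraph

/-! ### Topological embeddings -/

/-- A topological embedding of `H` into `G`: an injective map on vertices together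
with, for every edge `e` of `H`, a path in `G` (recorded by its vertex set
`pVerts e` and edge set `pEdges e`) joining the images of the endpoints of `e` and
avoiding the images of all other vertices, such that the paths of distinct edges are
internally disjoint. -/
structure TopEmb (H G : Multigraph) where
  vmap : H.V → G.V
  vmap_inj : Function.Injective vmap
  pVerts : H.E → Set G.V
  pEdges : H.E → Set G.E
  is_path : ∀ e : H.E, ∃ (a b : H.V) (w : G.Walk (vmap a) (vmap b)),
    H.ends e = s(a, b) ∧ w.IsPath ∧
    pVerts e = {x | x ∈ w.support} ∧ pEdges e = {f | f ∈ w.edgeList} ∧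
    ∀ u : H.V, u ∉ H.ends e → vmap u ∉ w.support
  int_disjoint : ∀ e f : H.E, e ≠ f → ∀ x ∈ pVerts e ∩ pVerts f,
    ∃ a : H.V, a ∈ H.ends e ∧ a ∈ H.ends f ∧ x = vmap a
  edge_disjoint : ∀ e f : H.E, e ≠ f → pEdges e ∩ pEdges f = ∅

namespace TopEmb

variable {H G : Multigraph}

/-- The image `h(S)` of a subgraph `S ⊆ H` under a topological embedding `h`. -/
def imageOf (h : TopEmb H G) (S : H.Subgraph) : G.Subgraph where
  verts := (h.vmap '' S.verts) ∪ ⋃ e ∈ S.edges, h.pVerts e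
  edges := ⋃ e ∈ S.edges, h.pEdges e
  closed := by
    intro f hf v hv
    simp only [Set.mem_iUnion] at hf
    obtain ⟨e, he, hfe⟩ := hf
    obtain ⟨a, b, w, -, -, hV, hE, -⟩ := h.is_path e
    right
    simp only [Set.mem_iUnion]
    refine ⟨e, he, ?_⟩
    rw [hV]
    rw [hE] at hfe
    exact Multigraph.Walk.mem_support_of_mem_edgeList w f v hfe hv

/-- The image `h(H)` of a topological embedding. -/
def image (h : TopEmb H G) : G.Subgraph := h.imageOf (Multigraph.Subgraph.top H)

end TopEmb
/-! ### Hexagonal grids -/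

/-- The vertex type of the hexagonal grid of radius `r`: the vertices are arranged on
`r` concentric principal cycles, the `i`-th of which (counting from the inside,
starting at `i = 0`) has `6 * (2 * i + 1)` vertices. -/
abbrev HexV (r : ℕ) : Type := (i : Fin r) × ZMod (6 * (2 * i.val + 1))

/-- The endpoint on the `i`-th principal cycle of the `k`-th spoke joining the `i`-th
and the `(i+1)`-st principal cycle. -/
def spokeOutV (r : ℕ) (i : Fin (r - 1)) (k : ℕ) : HexV r :=
  ⟨⟨i.val, by have := i.isLt; omega⟩,
    ((k / (i.val + 1)) * (2 * i.val + 1) + 2 * (k % (i.val + 1)) : ℕ)⟩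

/-- The endpoint on the `(i+1)`-st principal cycle of the `k`-th spoke joining the
`i`-th and the `(i+1)`-st principal cycle. -/
def spokeInV (r : ℕ) (i : Fin (r - 1)) (k : ℕ) : HexV r :=
  ⟨⟨i.val + 1, by have := i.isLt; omega⟩,
    ((k / (i.val + 1)) * (2 * (i.val + 1) + 1) + 2 * (k % (i.val + 1)) + 1 : ℕ)⟩

/-- The hexagonal grid of radius `r` (`r` concentric cycles of hexagons): its vertices
lie on `r` principal cycles, the `i`-th principal cycle (0-indexed) having
`6 * (2 * i + 1)` vertices and being joined to the next one by `6 * (i + 1)` spokes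
attached alternatingly. -/
def hexGrid (r : ℕ) : Multigraph where
  V := HexV r
  E := ((i : Fin r) × ZMod (6 * (2 * i.val + 1))) ⊕ ((i : Fin (r - 1)) × ZMod (6 * (i.val + 1)))
  ends := fun e => match e with
    | .inl ⟨i, j⟩ => s((⟨i, j⟩ : HexV r), ⟨i, j + 1⟩)
    | .inr ⟨i, k⟩ => s(spokeOutV r i k.val, spokeInV r i k.val)
  loopless := by
    rintro (⟨i, j⟩ | ⟨i, k⟩) h
    · rw [Sym2.mk_isDiag_iff] at h
      have hj : j = j + 1 := eq_of_heq (Sigma.ext_iff.mp h).2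
      have h1 : (1 : ZMod (6 * (2 * i.val + 1))) = 0 := left_eq_add.mp hj
      haveI : Fact (1 < 6 * (2 * i.val + 1)) := ⟨by omega⟩
      exact one_ne_zero h1
    · rw [Sym2.mk_isDiag_iff] at h
      have := congrArg (fun v : HexV r => v.1.val) h
      simp [spokeOutV, spokeInV] at this

@[simp] lemma hexGrid_ends_inl (r : ℕ) (i : Fin r) (j : ZMod (6 * (2 * i.val + 1))) :
    (hexGrid r).ends (Sum.inl ⟨i, j⟩) = s((⟨i, j⟩ : HexV r), ⟨i, j + 1⟩) := rfl

@[simp] lemma hexGrid_ends_inr (r : ℕ) (i : Fin (r - 1)) (k : ZMod (6 * (i.val + 1))) :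
    (hexGrid r).ends (Sum.inr ⟨i, k⟩) = s(spokeOutV r i k.val, spokeInV r i k.val) := rfl

/-- The `i`-th principal cycle of the hexagonal grid of radius `r` (`i` is 0-indexed,
so `i = ⟨0, _⟩` is the innermost principal cycle `C_1` of the paper and
`i = ⟨r-1, _⟩` the outermost one `C_r`). -/
def principalCycle (r : ℕ) (i : Fin r) : (hexGrid r).Subgraph where
  verts := {v | v.1 = i}
  edges := {e | ∃ j, e = Sum.inl ⟨i, j⟩}
  closed := by
    rintro e ⟨j, rfl⟩ v hv
    rw [hexGrid_ends_inl] at hv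
    rcases Sym2.mem_iff.mp hv with rfl | rfl <;> rfl

/-- The subgrid `H^i` of the hexagonal grid bounded by the `i`-th principal cycle:
the induced subgraph on the vertices of the principal cycles `C_1, …, C_i`. -/
def hexSubgridLE (r : ℕ) (i : Fin r) : (hexGrid r).Subgraph :=
  (hexGrid r).induce {v | v.1 ≤ i}

/-- The subgrid `H^i ∖ C_i` of the hexagonal grid: everything strictly inside the
`i`-th principal cycle. -/
def hexSubgridLT (r : ℕ) (i : Fin r) : (hexGrid r).Subgraph :=
  (hexGrid r).induce {v | v.1 < i}

namespace TopEmb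

variable {G : Multigraph} {r : ℕ}

/-- An attachment of a topological embedding `h : H_r → G`: an `h(H_r)`-component of
`G` that intersects the interior `h(H_r ∖ C_r)` of `h(H_r)`. -/
def IsAttachment (h : TopEmb (hexGrid r) G) (C : G.Subgraph) : Prop :=
  G.IsHComp h.image C ∧
  (C.verts ∩ (h.imageOf ((hexGrid r).deleteVerts {v | v.1.val = r - 1})).verts).Nonempty

/-- A topological embedding `h : H_r → G` is flat if the union of `h(H_r)` with all
its attachments is planar. -/
def Flat (h : TopEmb (hexGrid r) G) : Prop :=
  ((h.image.union (Multigraph.Subgraph.sUnion {C | h.IsAttachment C})).toGraph).IsPlanar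

/-- The subgraph `K_i` of `G`: the image `h(H^i)` together with all attachments of
`h(H_r)` that intersect the interior `h(H^i ∖ C_i)`. -/
def K (h : TopEmb (hexGrid r) G) (i : Fin r) : G.Subgraph :=
  (h.imageOf (hexSubgridLE r i)).union
    (Multigraph.Subgraph.sUnion {C | h.IsAttachment C ∧
      (C.verts ∩ (h.imageOf (hexSubgridLT r i)).verts).Nonempty})

/-- The edge set `F_i`: all edges of `K_i` having at least one endpoint on `h(C_i)`. -/
def Fset (h : TopEmb (hexGrid r) G) (i : Fin r) : Set G.E :=
  {e | e ∈ (h.K i).edges ∧ ∃ v ∈ G.ends e, v ∈ (h.imageOf (principalCycle r i)).verts}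

/-- The subgraph `I_i = K_i ∖ h(C_i)`: delete from `K_i` all vertices of `h(C_i)` and
all edges incident with them. -/
def Iset (h : TopEmb (hexGrid r) G) (i : Fin r) : G.Subgraph :=
  (h.K i).delete (h.imageOf (principalCycle r i)).verts

end TopEmb
/-! ### Graph constructions -/

namespace Multigraph

open Classical in
/-- The graph obtained from `G` by contracting the (induced) subgraph on a vertex set
`A` to a single new vertex: all vertices of `A` and all edges with both endpoints in
`A` are deleted, a new vertex (the vertex `Sum.inr ()`) is added, and every edge with
exactly one endpoint in `A` now joins its other endpoint to the new vertex. -/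
noncomputable def contract (G : Multigraph) (A : Set G.V) : Multigraph where
  V := {v : G.V // v ∉ A} ⊕ Unit
  E := {e : G.E // ∃ v ∈ G.ends e, v ∉ A}
  ends := fun e => (G.ends e.val).map
    (fun v => if h : v ∈ A then Sum.inr () else Sum.inl ⟨v, h⟩)
  loopless := by
    intro e he
    obtain ⟨v, hv, hvA⟩ := e.2
    obtain ⟨⟨a, b⟩, hab⟩ := Quot.exists_rep (G.ends e.val)
    have hab' : G.ends e.val = s(a, b) := hab.symm
    have hne : a ≠ b := fun hh => G.loopless e.val (by rw [hab']; exact Sym2.mk_isDiag_iff.mpr hh)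
    rw [hab'] at he hv
    rw [Sym2.map_pair_eq, Sym2.mk_isDiag_iff] at he
    rw [Sym2.mem_iff] at hv
    by_cases ha : a ∈ A <;> by_cases hb : b ∈ A
    · rcases hv with rfl | rfl <;> exact hvA (by assumption)
    · rw [dif_pos ha, dif_neg hb] at he; exact absurd he (by simp)
    · rw [dif_neg ha, dif_pos hb] at he; exact absurd he (by simp)
    · rw [dif_neg ha, dif_neg hb] at he
      exact hne (congrArg Subtype.val (Sum.inl_injective he))

/-- The graph `G^{e₁ × e₂}` obtained from `G` by crossing the two distinct edges
`e₁` and `e₂`: delete `e₁` and `e₂`, add a new vertex (the vertex `Sum.inr ()`), and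
add four new edges joining the new vertex to the two endpoints of `e₁` and to the two
endpoints of `e₂`. -/
def crossAt (G : Multigraph) (e₁ e₂ : G.E) : Multigraph where
  V := G.V ⊕ Unit
  E := {e : G.E // e ≠ e₁ ∧ e ≠ e₂} ⊕
    {p : Fin 2 × G.V // p.2 ∈ G.ends (if p.1 = 0 then e₁ else e₂)}
  ends := fun f => match f with
    | .inl g => (G.ends g.val).map Sum.inl
    | .inr p => s(Sum.inl p.val.2, Sum.inr ())
  loopless := by
    rintro (g | p) h
    · exact G.loopless g.val ((Sym2.isDiag_map Sum.inl_injective).mp h)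
    · rw [Sym2.mk_isDiag_iff] at h
      exact absurd h (by simp)

/-- A set `F` of edges of `G`, viewed as a set of edges of `G^{e₁ × e₂}` (only
meaningful when `e₁, e₂ ∉ F`). -/
def liftF (G : Multigraph) (e₁ e₂ : G.E) (F : Set G.E) : Set (G.crossAt e₁ e₂).E :=
  {f | ∃ g : {e : G.E // e ≠ e₁ ∧ e ≠ e₂}, f = Sum.inl g ∧ g.val ∈ F}

/-- The `j`-th vertex (for `0 ≤ j ≤ k`) on the path of length `k` replacing the
edge `e` in the subdivision of `G` in which every edge is subdivided `k - 1` times. -/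
noncomputable def subdivVert (G : Multigraph) (k : ℕ) (e : G.E) (j : ℕ) : G.V ⊕ (G.E × Fin (k - 1)) :=
  if h0 : j = 0 then Sum.inl (Quot.out (G.ends e)).1
  else if h : j < k then Sum.inr (e, ⟨j - 1, by omega⟩)
  else Sum.inl (Quot.out (G.ends e)).2

/-- The graph `G̃` obtained from `G` by subdividing every edge `k - 1` times, that
is, replacing every edge by a path of length `k` (for `k ≥ 1`). -/
noncomputable def subdivide (G : Multigraph) (k : ℕ) : Multigraph where
  V := G.V ⊕ (G.E × Fin (k - 1))
  E := G.E × Fin k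
  ends := fun p => s(G.subdivVert k p.1 p.2.val, G.subdivVert k p.1 (p.2.val + 1))
  loopless := by
    rintro ⟨e, j⟩ h
    dsimp only at h
    rw [Sym2.mk_isDiag_iff] at h
    have hj : j.val < k := j.isLt
    unfold subdivVert at h
    by_cases h0 : j.val = 0
    · rw [dif_pos h0] at h
      by_cases h1 : j.val + 1 < k
      · rw [dif_neg (by omega), dif_pos h1] at h
        exact absurd h (by simp)
      · rw [dif_neg (by omega), dif_neg (by omega)] at h
        exact sym2_out_ne _ (G.loopless e) (Sum.inl_injective h)
    · rw [dif_neg h0, dif_pos hj] at h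
      by_cases h1 : j.val + 1 < k
      · rw [dif_neg (by omega), dif_pos h1] at h
        have h3 := Sum.inr_injective h
        rw [Prod.mk.injEq] at h3
        have h2 : j.val - 1 = j.val + 1 - 1 := congrArg Fin.val h3.2
        omega
      · rw [dif_neg (by omega), dif_neg (by omega)] at h
        exact absurd h (by simp)

/-- The set of edges of the subdivision `G̃` of `G` arising from the subdivision of
an edge in `F`. -/
def subdivF (G : Multigraph) (k : ℕ) (F : Set G.E) : Set (G.subdivide k).E :=
  {p | p.1 ∈ F}

/-- The graph `G^{×ē}` obtained from `G` by successively crossing `e 0` with `e 1`,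
`e 2` with `e 3`, …, `e (2l-2)` with `e (2l-1)` (for pairwise distinct edges
`e 0, …, e (2l-1)`): the crossed edges are deleted, `l` new vertices are added (one
for each pair), and each new vertex is joined by four new edges to the endpoints of
the two edges of its pair. -/
def multiCross (G : Multigraph) (l : ℕ) (e : Fin (2 * l) → G.E) : Multigraph where
  V := G.V ⊕ Fin l
  E := {f : G.E // ∀ i, f ≠ e i} ⊕ {p : Fin (2 * l) × G.V // p.2 ∈ G.ends (e p.1)}
  ends := fun f => match f with
    | .inl g => (G.ends g.val).map Sum.inl
    | .inr p => s(Sum.inl p.val.2,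
        (Sum.inr ⟨p.val.1.val / 2, by have := p.val.1.isLt; omega⟩ : G.V ⊕ Fin l))
  loopless := by
    rintro (g | p) h
    · exact G.loopless g.val ((Sym2.isDiag_map Sum.inl_injective).mp h)
    · rw [Sym2.mk_isDiag_iff] at h
      exact absurd h (by simp)

end Multigraph

open Set

namespace CurveAux

noncomputable def aff (a b : ℝ) : ℝ → ℝ := fun t => a + t * (b - a)

lemma aff_cont (a b : ℝ) : Continuous (aff a b) := by unfold aff; continuity

lemma aff_inj {a b : ℝ} (hab : a ≠ b) : Function.Injective (aff a b) := by
  intro s t h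
  have hba : b - a ≠ 0 := sub_ne_zero.mpr (Ne.symm hab)
  exact mul_right_cancel₀ hba (add_left_cancel h)

lemma aff_eq (a b : ℝ) : aff a b = fun x => (b - a) * x + a := by
  funext t; simp [aff]; ring

lemma aff_rev (a b : ℝ) : aff a b = (aff b a) ∘ (fun t => 1 - t) := by
  funext t; simp [aff]; ring

lemma one_sub_image_Icc : (fun t : ℝ => 1 - t) '' Icc 0 1 = Icc 0 1 := by
  rw [show (fun t : ℝ => 1 - t) = (fun t : ℝ => 1 - t) from rfl, Set.image_const_sub_Icc]
  norm_num

lemma one_sub_image_Ioo : (fun t : ℝ => 1 - t) '' Ioo 0 1 = Ioo 0 1 := by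
  rw [Set.image_const_sub_Ioo]; norm_num

lemma aff_image_Icc {a b : ℝ} (hab : a ≠ b) : aff a b '' Icc 0 1 = uIcc a b := by
  rcases lt_or_gt_of_ne hab with h | h
  · rw [aff_eq, image_affine_Icc' (sub_pos.mpr h)]
    simp [uIcc_of_le h.le]
  · rw [aff_rev, image_comp, one_sub_image_Icc, aff_eq,
      image_affine_Icc' (sub_pos.mpr h)]
    simp [uIcc_of_ge h.le]

lemma aff_image_Ioo {a b : ℝ} (hab : a ≠ b) : aff a b '' Ioo 0 1 = uIoo a b := by
  rcases lt_or_gt_of_ne hab with h | h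
  · rw [aff_eq, image_affine_Ioo (sub_pos.mpr h)]
    simp [uIoo_of_lt h]
  · rw [aff_rev, image_comp, one_sub_image_Ioo, aff_eq,
      image_affine_Ioo (sub_pos.mpr h)]
    simp [uIoo_of_gt h]

lemma aff_mapsTo {a b : ℝ} (ha : a ∈ Icc (0:ℝ) 1) (hb : b ∈ Icc (0:ℝ) 1) :
    MapsTo (aff a b) (Icc 0 1) (Icc 0 1) := by
  rcases eq_or_ne a b with rfl | hab
  · intro t _; simpa [aff] using ha
  · intro t ht
    have h2 := mem_image_of_mem (aff a b) ht
    rw [aff_image_Icc hab] at h2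
    exact uIcc_subset_Icc ha hb h2

/-- reparametrized subcurve of `f` from `f a` to `f b` -/
noncomputable def sub (f : ℝ → ℝ × ℝ) (a b : ℝ) : ℝ → ℝ × ℝ := f ∘ aff a b

lemma sub_zero (f : ℝ → ℝ × ℝ) (a b : ℝ) : sub f a b 0 = f a := by simp [sub, aff]

lemma sub_one (f : ℝ → ℝ × ℝ) (a b : ℝ) : sub f a b 1 = f b := by simp [sub, aff]

lemma sub_cont {f : ℝ → ℝ × ℝ} {a b : ℝ} (hf : ContinuousOn f (Icc 0 1))
    (ha : a ∈ Icc (0:ℝ) 1) (hb : b ∈ Icc (0:ℝ) 1) :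
    ContinuousOn (sub f a b) (Icc 0 1) :=
  hf.comp (aff_cont a b).continuousOn (aff_mapsTo ha hb)

lemma sub_injOn {f : ℝ → ℝ × ℝ} {a b : ℝ} (hf : InjOn f (Icc 0 1))
    (ha : a ∈ Icc (0:ℝ) 1) (hb : b ∈ Icc (0:ℝ) 1) (hab : a ≠ b) :
    InjOn (sub f a b) (Icc 0 1) := by
  intro s hs t ht h
  exact aff_inj hab (hf (aff_mapsTo ha hb hs) (aff_mapsTo ha hb ht) h)

lemma sub_image_Icc {f : ℝ → ℝ × ℝ} {a b : ℝ} (hab : a ≠ b) :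
    sub f a b '' Icc 0 1 = f '' uIcc a b := by
  rw [sub, image_comp, aff_image_Icc hab]

lemma sub_image_Ioo {f : ℝ → ℝ × ℝ} {a b : ℝ} (hab : a ≠ b) :
    sub f a b '' Ioo 0 1 = f '' uIoo a b := by
  rw [sub, image_comp, aff_image_Ioo hab]

/-- concatenation of two curves -/
noncomputable def concat (c1 c2 : ℝ → ℝ × ℝ) : ℝ → ℝ × ℝ :=
  fun t => if t ≤ 1/2 then c1 (2*t) else c2 (2*t - 1)

lemma concat_zero (c1 c2 : ℝ → ℝ × ℝ) : concat c1 c2 0 = c1 0 := by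
  simp [concat]

lemma concat_one (c1 c2 : ℝ → ℝ × ℝ) : concat c1 c2 1 = c2 1 := by
  norm_num [concat]

lemma concat_cont {c1 c2 : ℝ → ℝ × ℝ} (h1 : ContinuousOn c1 (Icc 0 1))
    (h2 : ContinuousOn c2 (Icc 0 1)) (h : c1 1 = c2 0) :
    ContinuousOn (concat c1 c2) (Icc 0 1) := by
  unfold concat
  apply ContinuousOn.if
  · intro a ha
    have : a = 1/2 := by
      have := ha.2
      rw [show {a : ℝ | a ≤ 1/2} = Iic (1/2) from rfl, frontier_Iic] at this
      exact this
    subst this; norm_num [h]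
  · apply h1.comp (continuous_const.mul continuous_id).continuousOn
    intro t ht
    simp only [show {a : ℝ | a ≤ 1/2} = Iic (1/2) from rfl, closure_Iic, mem_inter_iff,
      mem_Icc, mem_Iic] at ht
    obtain ⟨⟨ht0, ht1⟩, ht2⟩ := ht
    exact ⟨by simp; linarith, by simp; linarith⟩
  · apply h2.comp ((continuous_const.mul continuous_id).sub continuous_const).continuousOn
    intro t ht
    have hset : {a : ℝ | ¬ a ≤ 1/2} = Ioi (1/2) := by ext a; simp [not_le]
    rw [hset, closure_Ioi] at ht
    obtain ⟨⟨ht0, ht1⟩, ht2⟩ := ht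
    rw [mem_Ici] at ht2
    exact ⟨by simp; linarith, by simp; linarith⟩

lemma concat_image_Icc {c1 c2 : ℝ → ℝ × ℝ} (h : c1 1 = c2 0) :
    concat c1 c2 '' Icc 0 1 = c1 '' Icc 0 1 ∪ c2 '' Icc 0 1 := by
  ext x
  constructor
  · rintro ⟨t, ht, rfl⟩
    unfold concat
    split_ifs with h
    · exact Or.inl ⟨2*t, ⟨by linarith [ht.1], by linarith⟩, rfl⟩
    · exact Or.inr ⟨2*t - 1, ⟨by linarith [not_le.mp h], by linarith [ht.2]⟩, rfl⟩
  · rintro (⟨s, hs, rfl⟩ | ⟨s, hs, rfl⟩)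
    · refine ⟨s/2, ⟨by linarith [hs.1], by linarith [hs.2]⟩, ?_⟩
      have : s/2 ≤ 1/2 := by linarith [hs.2]
      simp only [concat, if_pos this]; ring_nf
    · refine ⟨(s+1)/2, ⟨by linarith [hs.1], by linarith [hs.2]⟩, ?_⟩
      rcases le_or_gt ((s+1)/2) (1/2) with h | h
      · have hs0 : s = 0 := le_antisymm (by linarith) hs.1
        subst hs0
        simp only [concat, if_pos h]
        norm_num [‹c1 1 = c2 0›]
      · simp only [concat, if_neg (not_le.mpr h)]
        ring_nf

lemma concat_image_Ioo {c1 c2 : ℝ → ℝ × ℝ} :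
    concat c1 c2 '' Ioo 0 1 = c1 '' Ioo 0 1 ∪ {c1 1} ∪ c2 '' Ioo 0 1 := by
  ext x
  constructor
  · rintro ⟨t, ht, rfl⟩
    unfold concat
    split_ifs with h
    · rcases eq_or_lt_of_le h with h' | h'
      · left; right; rw [h']; norm_num
      · exact Or.inl (Or.inl ⟨2*t, ⟨by linarith [ht.1], by linarith⟩, rfl⟩)
    · exact Or.inr ⟨2*t - 1, ⟨by linarith [not_le.mp h], by linarith [ht.2]⟩, rfl⟩
  · rintro ((⟨s, hs, rfl⟩ | rfl) | ⟨s, hs, rfl⟩)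
    · refine ⟨s/2, ⟨by linarith [hs.1], by linarith [hs.2]⟩, ?_⟩
      have : s/2 ≤ 1/2 := by linarith [hs.2]
      simp only [concat, if_pos this]; ring_nf
    · refine ⟨1/2, by norm_num, ?_⟩
      norm_num [concat]
    · refine ⟨(s+1)/2, ⟨by linarith [hs.1], by linarith [hs.2]⟩, ?_⟩
      have h : ¬ ((s+1)/2 ≤ 1/2) := by push_neg; linarith [hs.1]
      simp only [concat, if_neg h]; ring_nf

lemma concat_injOn {c1 c2 : ℝ → ℝ × ℝ} (h1 : InjOn c1 (Icc 0 1)) (h2 : InjOn c2 (Icc 0 1))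
    (h : c1 1 = c2 0) (hint : c1 '' Icc 0 1 ∩ c2 '' Icc 0 1 ⊆ {c1 1}) :
    InjOn (concat c1 c2) (Icc 0 1) := by
  intro s hs t ht heq
  unfold concat at heq
  split_ifs at heq with h1' h2' h2'
  · have := h1 ⟨by linarith [hs.1], by linarith⟩ ⟨by linarith [ht.1], by linarith⟩ heq
    linarith
  · -- c1 (2s) = c2 (2t-1)
    have hm1 : (2*s : ℝ) ∈ Icc (0:ℝ) 1 := ⟨by linarith [hs.1], by linarith⟩
    have hm2 : (2*t - 1 : ℝ) ∈ Icc (0:ℝ) 1 := ⟨by linarith [not_le.mp h2'], by linarith [ht.2]⟩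
    have hx : c1 (2*s) ∈ c1 '' Icc 0 1 ∩ c2 '' Icc 0 1 :=
      ⟨⟨2*s, hm1, rfl⟩, ⟨2*t-1, hm2, heq.symm⟩⟩
    have hx1 : c1 (2*s) = c1 1 := hint hx
    have hs1 : 2*s = 1 := h1 hm1 (by norm_num) hx1
    have hx2 : c2 (2*t-1) = c2 0 := by rw [← heq, hx1, h]
    have ht1 : 2*t - 1 = 0 := h2 hm2 (by norm_num) hx2
    linarith
  · have hm1 : (2*t : ℝ) ∈ Icc (0:ℝ) 1 := ⟨by linarith [ht.1], by linarith⟩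
    have hm2 : (2*s - 1 : ℝ) ∈ Icc (0:ℝ) 1 := ⟨by linarith [not_le.mp h1'], by linarith [hs.2]⟩
    have hx : c1 (2*t) ∈ c1 '' Icc 0 1 ∩ c2 '' Icc 0 1 :=
      ⟨⟨2*t, hm1, rfl⟩, ⟨2*s-1, hm2, heq⟩⟩
    have hx1 : c1 (2*t) = c1 1 := hint hx
    have ht1 : 2*t = 1 := h1 hm1 (by norm_num) hx1
    have hx2 : c2 (2*s-1) = c2 0 := by rw [heq, hx1, h]
    have hs1 : 2*s - 1 = 0 := h2 hm2 (by norm_num) hx2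
    linarith
  · have := h2 ⟨by linarith [not_le.mp h1'], by linarith [hs.2]⟩
      ⟨by linarith [not_le.mp h2'], by linarith [ht.2]⟩ heq
    linarith

/-- reversal of a curve -/
noncomputable def rev (c : ℝ → ℝ × ℝ) : ℝ → ℝ × ℝ := fun t => c (1 - t)

lemma rev_zero (c : ℝ → ℝ × ℝ) : rev c 0 = c 1 := by simp [rev]
lemma rev_one (c : ℝ → ℝ × ℝ) : rev c 1 = c 0 := by simp [rev]

lemma rev_cont {c : ℝ → ℝ × ℝ} (h : ContinuousOn c (Icc 0 1)) :
    ContinuousOn (rev c) (Icc 0 1) := by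
  apply h.comp (continuous_const.sub continuous_id).continuousOn
  intro t ht
  obtain ⟨ht0, ht1⟩ := ht
  exact ⟨by simp; linarith, by simp; linarith⟩

lemma rev_injOn {c : ℝ → ℝ × ℝ} (h : InjOn c (Icc 0 1)) : InjOn (rev c) (Icc 0 1) := by
  intro s hs t ht heq
  have := h ⟨by linarith [hs.2], by linarith [hs.1]⟩ ⟨by linarith [ht.2], by linarith [ht.1]⟩ heq
  linarith

lemma rev_image_Icc (c : ℝ → ℝ × ℝ) : rev c '' Icc 0 1 = c '' Icc 0 1 := by
  rw [show rev c = c ∘ (fun t => 1 - t) from rfl, image_comp, one_sub_image_Icc]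

lemma rev_image_Ioo (c : ℝ → ℝ × ℝ) : rev c '' Ioo 0 1 = c '' Ioo 0 1 := by
  rw [show rev c = c ∘ (fun t => 1 - t) from rfl, image_comp, one_sub_image_Ioo]

end CurveAux


/-! ### Helper lemmas for the main theorem -/

open Set

lemma uIoo_subset_Ioo01 {a b : ℝ} (ha : a ∈ Set.Icc (0:ℝ) 1) (hb : b ∈ Set.Icc (0:ℝ) 1) :
    Set.uIoo a b ⊆ Set.Ioo 0 1 := by
  intro y hy
  simp only [Set.uIoo, Set.mem_Ioo] at hy
  exact ⟨lt_of_le_of_lt (le_inf ha.1 hb.1) hy.1, lt_of_lt_of_le hy.2 (sup_le ha.2 hb.2)⟩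

lemma uIoo_zero_one_disj {t c c' : ℝ} (ht : t ∈ Set.Ioo (0:ℝ) 1)
    (hc : c = 0 ∨ c = 1) (hc' : c' = 0 ∨ c' = 1) (hne : c ≠ c') :
    Set.uIoo c t ∩ Set.uIoo c' t = ∅ := by
  have hdisj : Set.uIoo (0:ℝ) t ∩ Set.uIoo (1:ℝ) t = ∅ := by
    rw [Set.uIoo_of_le ht.1.le, Set.uIoo_of_ge ht.2.le]
    ext y
    simp only [Set.mem_inter_iff, Set.mem_Ioo, Set.mem_empty_iff_false, iff_false]
    rintro ⟨⟨_, h2⟩, h3, _⟩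
    linarith
  rcases hc with rfl | rfl <;> rcases hc' with rfl | rfl
  · exact absurd rfl hne
  · exact hdisj
  · rw [Set.inter_comm]; exact hdisj
  · exact absurd rfl hne

lemma uIcc_zero_one_inter {t c c' : ℝ} (ht : t ∈ Set.Ioo (0:ℝ) 1)
    (hc : c = 0 ∨ c = 1) (hc' : c' = 0 ∨ c' = 1) (hne : c ≠ c') :
    Set.uIcc c t ∩ Set.uIcc c' t ⊆ {t} := by
  have hkey : Set.uIcc (0:ℝ) t ∩ Set.uIcc (1:ℝ) t ⊆ {t} := by
    rw [Set.uIcc_of_le ht.1.le, Set.uIcc_of_ge ht.2.le]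
    intro y hy
    simp only [Set.mem_inter_iff, Set.mem_Icc] at hy
    exact Set.mem_singleton_iff.mpr (le_antisymm hy.1.2 hy.2.1)
  rcases hc with rfl | rfl <;> rcases hc' with rfl | rfl
  · exact absurd rfl hne
  · exact hkey
  · rw [Set.inter_comm]; exact hkey
  · exact absurd rfl hne

lemma not_mem_uIcc_of {t c c' : ℝ} (ht : t ∈ Set.Ioo (0:ℝ) 1)
    (hc : c = 0 ∨ c = 1) (hc' : c' = 0 ∨ c' = 1) (hne : c ≠ c') :
    c' ∉ Set.uIcc c t := by
  rcases hc with rfl | rfl <;> rcases hc' with rfl | rfl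
  · exact absurd rfl hne
  · rw [Set.uIcc_of_le ht.1.le]
    intro hmem
    rw [Set.mem_Icc] at hmem
    linarith [ht.2, hmem.2]
  · rw [Set.uIcc_of_ge ht.2.le]
    intro hmem
    rw [Set.mem_Icc] at hmem
    linarith [ht.1, hmem.1]
  · exact absurd rfl hne

namespace Drawing

variable {H : Multigraph} (Δ : Drawing H)

lemma vpos_not_interior (z : H.V) (q : H.E) : Δ.vpos z ∉ Δ.par q '' Set.Ioo 0 1 := by
  intro hmem
  have harc : Δ.vpos z ∈ Δ.arc q := Set.image_mono Set.Ioo_subset_Icc_self hmem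
  have hz : z ∈ H.ends q := Δ.vertex_on_arc q z harc
  obtain ⟨v, w, hvw, h0, h1⟩ := Δ.ends_match q
  obtain ⟨t, ht, hpt⟩ := hmem
  rw [hvw, Sym2.mem_iff] at hz
  rcases hz with rfl | rfl
  · have : t = 0 := Δ.par_inj q (Set.Ioo_subset_Icc_self ht) (by norm_num) (by rw [hpt, h0])
    exact absurd this (ne_of_gt ht.1)
  · have : t = 1 := Δ.par_inj q (Set.Ioo_subset_Icc_self ht) (by norm_num) (by rw [hpt, h1])
    exact absurd this (ne_of_lt ht.2)

lemma planar_arc_inter (hpl : Δ.crossings = ∅) {q q' : H.E} (hqq' : q ≠ q') {y : ℝ × ℝ}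
    (hy : y ∈ Δ.arc q) (hy' : y ∈ Δ.arc q') :
    ∃ z : H.V, y = Δ.vpos z ∧ z ∈ H.ends q ∧ z ∈ H.ends q' := by
  by_cases hr : y ∈ Set.range Δ.vpos
  · obtain ⟨z, rfl⟩ := hr
    exact ⟨z, rfl, Δ.vertex_on_arc q z hy, Δ.vertex_on_arc q' z hy'⟩
  · exfalso
    have : y ∈ Δ.crossings := ⟨hr, q, q', hqq', hy, hy'⟩
    rw [hpl] at this
    exact this

lemma planar_interior_disjoint (hpl : Δ.crossings = ∅) {q q' : H.E} (hqq' : q ≠ q') :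
    Δ.par q '' Set.Ioo 0 1 ∩ Δ.arc q' = ∅ := by
  ext y
  simp only [Set.mem_inter_iff, Set.mem_empty_iff_false, iff_false, not_and]
  intro hy hy'
  obtain ⟨z, rfl, hz, _⟩ := Δ.planar_arc_inter hpl hqq'
    (Set.image_mono Set.Ioo_subset_Icc_self hy) hy'
  exact Δ.vpos_not_interior z q hy

end Drawing

def finHalf {l : ℕ} (m : Fin (2 * l)) : Fin l := ⟨m.val / 2, by have := m.isLt; omega⟩

lemma finHalf_val {l : ℕ} (m : Fin (2 * l)) : (finHalf m).val = m.val / 2 := rfl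

def pairFn {α : Type} {l : ℕ} (a b : Fin l → α) (m : Fin (2 * l)) : α :=
  if m.val % 2 = 0 then a (finHalf m) else b (finHalf m)

lemma pairFn_eq_or {α : Type} {l : ℕ} (a b : Fin l → α) (m : Fin (2 * l)) :
    pairFn a b m = a (finHalf m) ∨ pairFn a b m = b (finHalf m) := by
  unfold pairFn
  split_ifs
  · exact Or.inl rfl
  · exact Or.inr rfl

lemma pairFn_parity {α : Type} {l : ℕ} (a b : Fin l → α) (m : Fin (2 * l)) :
    (m.val % 2 = 0 ∧ pairFn a b m = a (finHalf m)) ∨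
    (m.val % 2 = 1 ∧ pairFn a b m = b (finHalf m)) := by
  unfold pairFn
  split_ifs with h
  · exact Or.inl ⟨h, rfl⟩
  · exact Or.inr ⟨by omega, rfl⟩

lemma pairFn_pair {α : Type} {l : ℕ} (a b : Fin l → α) (i : Fin l) :
    ∃ m₁ m₂ : Fin (2 * l), pairFn a b m₁ = a i ∧ pairFn a b m₂ = b i ∧
      finHalf m₁ = i ∧ finHalf m₂ = i := by
  have hi := i.isLt
  refine ⟨⟨2 * i.val, by omega⟩, ⟨2 * i.val + 1, by omega⟩, ?_, ?_, ?_, ?_⟩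
  · unfold pairFn
    rw [if_pos (show (2 * i.val) % 2 = 0 by omega)]
    congr 1
    exact Fin.ext (show 2 * i.val / 2 = i.val by omega)
  · unfold pairFn
    rw [if_neg (show ¬ (2 * i.val + 1) % 2 = 0 by omega)]
    congr 1
    exact Fin.ext (show (2 * i.val + 1) / 2 = i.val by omega)
  · exact Fin.ext (show 2 * i.val / 2 = i.val by omega)
  · exact Fin.ext (show (2 * i.val + 1) / 2 = i.val by omega)

/-- The underlying `G`-edge of an edge of `G.multiCross l e`. -/
def multiU {G : Multigraph} {l : ℕ} (e : Fin (2 * l) → G.E) : (G.multiCross l e).E → G.E :=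
  Sum.elim Subtype.val (fun p => e p.val.1)


open Set in
lemma backward_dir (k : ℕ) (G : Multigraph) (Δ : Drawing G) (hΔ : Δ.CrossingsAtMost k)
    (hsub : ∀ e : G.E, {x | Δ.IsCrossing x ∧ x ∈ Δ.arc e}.Subsingleton) :
    ∃ l : ℕ, l ≤ k ∧ ∃ e : Fin (2 * l) → G.E,
      Function.Injective e ∧ (G.multiCross l e).IsPlanar := by
  classical
  obtain ⟨hfin, hcard⟩ := hΔ
  haveI : Fintype Δ.crossings := hfin.fintype
  set l := Δ.crossings.ncard with hl
  have hcardeq : Fintype.card Δ.crossings = l := by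
    rw [hl, ← Nat.card_coe_set_eq, Nat.card_eq_fintype_card]
  set φ : Fin l ≃ Δ.crossings := (Fintype.equivFinOfCardEq hcardeq).symm with hφ
  set x : Fin l → ℝ × ℝ := fun i => (φ i).val with hxdef
  have hxc : ∀ i, Δ.IsCrossing (x i) := fun i => (φ i).2
  have hxinj : Function.Injective x := fun i j h => φ.injective (Subtype.ext h)
  have hxsurj : ∀ y, Δ.IsCrossing y → ∃ i, x i = y := by
    intro y hy
    refine ⟨φ.symm ⟨y, hy⟩, ?_⟩
    rw [hxdef]
    simp
  have hxnv : ∀ i, x i ∉ Set.range Δ.vpos := fun i => (hxc i).1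
  choose a b hab ha hb using fun i => (hxc i).2
  choose vv ww hends h0 h1 using Δ.ends_match
  have huniq : ∀ (f : G.E) (i j : Fin l), x i ∈ Δ.arc f → x j ∈ Δ.arc f → i = j :=
    fun f i j hi hj => hxinj (hsub f ⟨hxc i, hi⟩ ⟨hxc j, hj⟩)
  set E2 : Fin (2 * l) → G.E := pairFn a b with hE2def
  have hE2x : ∀ m, x (finHalf m) ∈ Δ.arc (E2 m) := by
    intro m
    rcases pairFn_eq_or a b m with h | h <;> rw [hE2def, h]
    · exact ha _
    · exact hb _
  have hE2half : ∀ (m : Fin (2 * l)) (i : Fin l), x i ∈ Δ.arc (E2 m) → i = finHalf m :=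
    fun m i h => huniq (E2 m) i (finHalf m) h (hE2x m)
  have hE2inj : Function.Injective E2 := by
    intro m m' hmm
    have hhalf : finHalf m = finHalf m' := (hE2half m (finHalf m') (hmm ▸ hE2x m')).symm
    have hhv : m.val / 2 = m'.val / 2 := by rw [← finHalf_val, ← finHalf_val, hhalf]
    rw [hE2def] at hmm
    rcases pairFn_parity a b m with ⟨hp, hv⟩ | ⟨hp, hv⟩ <;>
      rcases pairFn_parity a b m' with ⟨hp', hv'⟩ | ⟨hp', hv'⟩
    · exact Fin.ext (by omega)
    · rw [hv, hv', ← hhalf] at hmm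
      exact absurd hmm (hab (finHalf m))
    · rw [hv, hv', ← hhalf] at hmm
      exact absurd hmm.symm (hab (finHalf m))
    · exact Fin.ext (by omega)
  -- parameter of the crossing on each crossed edge
  have hex : ∀ m : Fin (2 * l), ∃ t, t ∈ Set.Ioo (0:ℝ) 1 ∧ Δ.par (E2 m) t = x (finHalf m) := by
    intro m
    obtain ⟨t, ht, hpt⟩ := hE2x m
    refine ⟨t, ⟨?_, ?_⟩, hpt⟩
    · rcases eq_or_lt_of_le ht.1 with h | h
      · exact absurd ⟨vv (E2 m), by rw [← h0 (E2 m), h]; exact hpt⟩ (hxnv (finHalf m))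
      · exact h
    · rcases eq_or_lt_of_le ht.2 with h | h
      · exact absurd ⟨ww (E2 m), by rw [← h1 (E2 m), ← h]; exact hpt⟩ (hxnv (finHalf m))
      · exact h
  choose tx htxI htx using hex
  -- endpoint parameters
  set tvf : G.E → G.V → ℝ := fun f u => if u = vv f then 0 else 1 with htvfdef
  have htv01 : ∀ f u, tvf f u = 0 ∨ tvf f u = 1 := by
    intro f u
    rw [htvfdef]
    dsimp only
    split_ifs
    · exact Or.inl rfl
    · exact Or.inr rfl
  have htvI : ∀ f u, tvf f u ∈ Set.Icc (0:ℝ) 1 := by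
    intro f u
    rcases htv01 f u with h | h <;> rw [h] <;> constructor <;> norm_num
  have htvpar : ∀ f u, u ∈ G.ends f → Δ.par f (tvf f u) = Δ.vpos u := by
    intro f u hu
    rw [htvfdef]
    dsimp only
    split_ifs with h
    · rw [h]; exact h0 f
    · have huw : u = ww f := by
        rw [hends f, Sym2.mem_iff] at hu
        tauto
      rw [huw]; exact h1 f
  have htvdiff : ∀ f u u', u ∈ G.ends f → u' ∈ G.ends f → u ≠ u' → tvf f u ≠ tvf f u' := by
    intro f u u' hu hu' huu'
    rw [hends f, Sym2.mem_iff] at hu hu'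
    rw [htvfdef]
    dsimp only
    split_ifs with h h' h''
    · exact absurd (h.trans h'.symm) huu'
    · norm_num
    · norm_num
    · rcases hu with h1' | h1'
      · exact absurd h1' h
      rcases hu' with h2' | h2'
      · exact absurd h2' h''
      exact absurd (h1'.trans h2'.symm) huu'
  have htvtx : ∀ f u (m : Fin (2 * l)), tvf f u ≠ tx m := by
    intro f u m
    rcases htv01 f u with h | h <;> rw [h]
    · exact (htxI m).1.ne
    · exact (htxI m).2.ne'
  refine ⟨l, hcard, E2, hE2inj, ?_⟩
  set par' : (G.multiCross l E2).E → ℝ → ℝ × ℝ :=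
    fun q => Sum.elim (fun g => Δ.par g.val)
      (fun p => CurveAux.sub (Δ.par (E2 p.val.1)) (tvf (E2 p.val.1) p.val.2) (tx p.val.1)) q
    with hpar'def
  have hparl : ∀ g, par' (Sum.inl g) = Δ.par g.val := fun g => rfl
  have hparr : ∀ p, par' (Sum.inr p) =
      CurveAux.sub (Δ.par (E2 p.val.1)) (tvf (E2 p.val.1) p.val.2) (tx p.val.1) :=
    fun p => rfl
  have harc_inr : ∀ p, par' (Sum.inr p) '' Set.Icc 0 1 =
      Δ.par (E2 p.val.1) '' Set.uIcc (tvf (E2 p.val.1) p.val.2) (tx p.val.1) := by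
    intro p
    rw [hparr p]
    exact CurveAux.sub_image_Icc (htvtx _ _ _)
  have hint_inr : ∀ p, par' (Sum.inr p) '' Set.Ioo 0 1 =
      Δ.par (E2 p.val.1) '' Set.uIoo (tvf (E2 p.val.1) p.val.2) (tx p.val.1) := by
    intro p
    rw [hparr p]
    exact CurveAux.sub_image_Ioo (htvtx _ _ _)
  have huIccsub : ∀ (f : G.E) (u : G.V) (m : Fin (2 * l)),
      Set.uIcc (tvf f u) (tx m) ⊆ Set.Icc 0 1 :=
    fun f u m => Set.uIcc_subset_Icc (htvI f u) (Set.Ioo_subset_Icc_self (htxI m))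
  have harcsub : ∀ q, par' q '' Set.Icc 0 1 ⊆ Δ.arc (multiU E2 q) := by
    rintro (g | p)
    · rw [hparl]
      exact subset_rfl
    · rw [harc_inr]
      exact Set.image_mono (huIccsub _ _ _)
  have hintsub : ∀ q, par' q '' Set.Ioo 0 1 ⊆ Δ.par (multiU E2 q) '' Set.Ioo 0 1 := by
    rintro (g | p)
    · rw [hparl]
      exact subset_rfl
    · rw [hint_inr]
      exact Set.image_mono
        (uIoo_subset_Ioo01 (htvI _ _) (Set.Ioo_subset_Icc_self (htxI _)))
  have hkey : ∀ q q' : (G.multiCross l E2).E, multiU E2 q = multiU E2 q' →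
      ∀ y, y ∈ par' q '' Set.Icc 0 1 → y ∈ par' q' '' Set.Icc 0 1 →
      (∀ i, y ≠ x i) → q = q' := by
    rintro (g | p) (g' | p') hU y hy hy' hnx
    · exact congrArg Sum.inl (Subtype.ext hU)
    · exact absurd hU (g.2 p'.val.1)
    · exact absurd hU.symm (g'.2 p.val.1)
    · have hm : p.val.1 = p'.val.1 := hE2inj hU
      by_cases hu : p.val.2 = p'.val.2
      · exact congrArg Sum.inr (Subtype.ext (Prod.ext hm hu))
      · exfalso
        rw [harc_inr] at hy hy'
        rw [← hm] at hy'
        have hcc' : tvf (E2 p.val.1) p.val.2 ≠ tvf (E2 p.val.1) p'.val.2 := by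
          refine htvdiff _ _ _ p.2 ?_ hu
          rw [hm]
          exact p'.2
        have hyy : y ∈ Δ.par (E2 p.val.1) ''
            (Set.uIcc (tvf (E2 p.val.1) p.val.2) (tx p.val.1) ∩
             Set.uIcc (tvf (E2 p.val.1) p'.val.2) (tx p.val.1)) := by
          rw [Set.InjOn.image_inter (Δ.par_inj _) (huIccsub _ _ _) (huIccsub _ _ _)]
          exact ⟨hy, hy'⟩
        have := Set.image_mono (f := Δ.par (E2 p.val.1))
          (uIcc_zero_one_inter (htxI p.val.1) (htv01 _ _) (htv01 _ _) hcc') hyy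
        rw [Set.image_singleton, Set.mem_singleton_iff, htx p.val.1] at this
        exact hnx _ this
  refine ⟨{ vpos := Sum.elim Δ.vpos x
            par := par'
            par_cont := ?_
            par_inj := ?_
            ends_match := ?_
            vpos_inj := ?_
            arcs_inter := ?_
            vertex_on_arc := ?_
            at_most_two := ?_ }, ?_⟩
  · rintro (g | p)
    · rw [hparl]
      exact Δ.par_cont _
    · rw [hparr]
      exact CurveAux.sub_cont (Δ.par_cont _) (htvI _ _) (Set.Ioo_subset_Icc_self (htxI _))
  · rintro (g | p)
    · rw [hparl]
      exact Δ.par_inj _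
    · rw [hparr]
      exact CurveAux.sub_injOn (Δ.par_inj _) (htvI _ _) (Set.Ioo_subset_Icc_self (htxI _))
        (htvtx _ _ _)
  · rintro (g | p)
    · refine ⟨Sum.inl (vv g.val), Sum.inl (ww g.val), ?_, ?_, ?_⟩
      · show Sym2.map Sum.inl (G.ends g.val) = _
        rw [hends g.val, Sym2.map_pair_eq]
        rfl
      · rw [hparl]
        exact h0 g.val
      · rw [hparl]
        exact h1 g.val
    · refine ⟨Sum.inl p.val.2, Sum.inr (finHalf p.val.1), rfl, ?_, ?_⟩
      · rw [hparr, CurveAux.sub_zero]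
        exact htvpar _ _ p.2
      · rw [hparr, CurveAux.sub_one, htx p.val.1]
        rfl
  · rintro (v | i) (w | j) h
    · exact congrArg Sum.inl (Δ.vpos_inj h)
    · exact absurd ⟨v, h⟩ (hxnv j)
    · exact absurd ⟨w, h.symm⟩ (hxnv i)
    · exact congrArg Sum.inr (hxinj h)
  · intro q q' hne
    by_cases hU : multiU E2 q = multiU E2 q'
    · rcases q with g | p <;> rcases q' with g' | p'
      · exact absurd (congrArg Sum.inl (Subtype.ext hU)) hne
      · exact absurd hU (g.2 p'.val.1)
      · exact absurd hU.symm (g'.2 p.val.1)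
      · have hm : p.val.1 = p'.val.1 := hE2inj hU
        have hu : p.val.2 ≠ p'.val.2 := by
          intro hu
          exact hne (congrArg Sum.inr (Subtype.ext (Prod.ext hm hu)))
        rw [hint_inr, hint_inr, ← hm]
        have hcc' : tvf (E2 p.val.1) p.val.2 ≠ tvf (E2 p.val.1) p'.val.2 := by
          refine htvdiff _ _ _ p.2 ?_ hu
          rw [hm]
          exact p'.2
        rw [← Set.InjOn.image_inter (Δ.par_inj _)
            ((uIoo_subset_Ioo01 (htvI _ _) (Set.Ioo_subset_Icc_self (htxI _))).trans
              Set.Ioo_subset_Icc_self)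
            ((uIoo_subset_Ioo01 (htvI _ _) (Set.Ioo_subset_Icc_self (htxI _))).trans
              Set.Ioo_subset_Icc_self),
          uIoo_zero_one_disj (htxI p.val.1) (htv01 _ _) (htv01 _ _) hcc', Set.image_empty]
        exact Set.subsingleton_empty
    · exact (Δ.arcs_inter _ _ hU).anti (Set.inter_subset_inter (hintsub q) (hintsub q'))
  · rintro (g | p) (v | i) hmem
    · have hv : v ∈ G.ends g.val := by
        refine Δ.vertex_on_arc g.val v ?_
        have hmem' : Δ.vpos v ∈ par' (Sum.inl g) '' Set.Icc 0 1 := hmem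
        rwa [hparl] at hmem'
      exact Sym2.mem_map.mpr ⟨v, hv, rfl⟩
    · exfalso
      have hxi : x i ∈ Δ.arc g.val := by
        have hmem' : x i ∈ par' (Sum.inl g) '' Set.Icc 0 1 := hmem
        rwa [hparl] at hmem'
      obtain ⟨m₁, m₂, hm1, hm2, hh1, hh2⟩ := pairFn_pair a b i
      rcases Δ.at_most_two (x i) (hxnv i) g.val (a i) (b i) hxi (ha i) (hb i) with h | h | h
      · exact g.2 m₁ (h.trans hm1.symm)
      · exact g.2 m₂ (h.trans hm2.symm)
      · exact hab i h
    · have hv' : Δ.vpos v ∈ Δ.par (E2 p.val.1) ''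
          Set.uIcc (tvf (E2 p.val.1) p.val.2) (tx p.val.1) := by
        have hmem' : Δ.vpos v ∈ par' (Sum.inr p) '' Set.Icc 0 1 := hmem
        rwa [harc_inr] at hmem'
      by_cases hvp : v = p.val.2
      · subst hvp
        exact Sym2.mem_mk_left _ _
      · exfalso
        have hvmem : v ∈ G.ends (E2 p.val.1) :=
          Δ.vertex_on_arc _ v (Set.image_mono (huIccsub _ _ _) hv')
        obtain ⟨s, hs, hsv⟩ := hv'
        have hseq : s = tvf (E2 p.val.1) v :=
          Δ.par_inj _ (huIccsub _ _ _ hs) (htvI _ _) (by rw [hsv, htvpar _ _ hvmem])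
        have hin : tvf (E2 p.val.1) v ∈
            Set.uIcc (tvf (E2 p.val.1) p.val.2) (tx p.val.1) := hseq ▸ hs
        exact not_mem_uIcc_of (htxI p.val.1) (htv01 _ _) (htv01 _ _)
          (htvdiff _ _ _ p.2 hvmem (fun hcon => hvp hcon.symm)) hin
    · have hxarc : x i ∈ Δ.arc (E2 p.val.1) := harcsub (Sum.inr p) hmem
      have hieq : i = finHalf p.val.1 := hE2half _ _ hxarc
      rw [hieq]
      exact Sym2.mem_mk_right _ _
  · intro y hy q₁ q₂ q₃ h₁ h₂ h₃
    have hynx : ∀ i, y ≠ x i := fun i hyx => hy ⟨Sum.inr i, hyx.symm⟩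
    have hynv : y ∉ Set.range Δ.vpos := fun ⟨v, hv⟩ => hy ⟨Sum.inl v, hv⟩
    rcases Δ.at_most_two y hynv (multiU E2 q₁) (multiU E2 q₂) (multiU E2 q₃)
      (harcsub _ h₁) (harcsub _ h₂) (harcsub _ h₃) with h | h | h
    · exact Or.inl (hkey _ _ h y h₁ h₂ hynx)
    · exact Or.inr (Or.inl (hkey _ _ h y h₁ h₃ hynx))
    · exact Or.inr (Or.inr (hkey _ _ h y h₂ h₃ hynx))
  · ext y
    simp only [Set.mem_empty_iff_false, iff_false]
    rintro ⟨hnr, q, q', hne, hq, hq'⟩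
    have hq2 : y ∈ par' q '' Set.Icc 0 1 := hq
    have hq2' : y ∈ par' q' '' Set.Icc 0 1 := hq'
    have hynx : ∀ i, y ≠ x i := fun i hyx => hnr ⟨Sum.inr i, hyx.symm⟩
    have hynv : y ∉ Set.range Δ.vpos := fun ⟨v, hv⟩ => hnr ⟨Sum.inl v, hv⟩
    by_cases hU : multiU E2 q = multiU E2 q'
    · exact hne (hkey q q' hU y hq2 hq2' hynx)
    · have hyc : Δ.IsCrossing y :=
        ⟨hynv, multiU E2 q, multiU E2 q', hU, harcsub q hq2, harcsub q' hq2'⟩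
      obtain ⟨i, hi⟩ := hxsurj y hyc
      exact hynx i hi.symm


/-! ### Forward direction: from a planar drawing of the crossed graph -/

noncomputable def oriented {H : Multigraph} (Δ : Drawing H) (q : H.E) (A : H.V) : ℝ → ℝ × ℝ :=
  if Δ.par q 0 = Δ.vpos A then Δ.par q else CurveAux.rev (Δ.par q)

lemma oriented_cases {H : Multigraph} (Δ : Drawing H) (q : H.E) (A : H.V) :
    oriented Δ q A = Δ.par q ∨ oriented Δ q A = CurveAux.rev (Δ.par q) := by
  unfold oriented
  split_ifs
  · exact Or.inl rfl
  · exact Or.inr rfl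

lemma oriented_cont {H : Multigraph} (Δ : Drawing H) (q : H.E) (A : H.V) :
    ContinuousOn (oriented Δ q A) (Set.Icc 0 1) := by
  rcases oriented_cases Δ q A with h | h <;> rw [h]
  · exact Δ.par_cont q
  · exact CurveAux.rev_cont (Δ.par_cont q)

lemma oriented_injOn {H : Multigraph} (Δ : Drawing H) (q : H.E) (A : H.V) :
    Set.InjOn (oriented Δ q A) (Set.Icc 0 1) := by
  rcases oriented_cases Δ q A with h | h <;> rw [h]
  · exact Δ.par_inj q
  · exact CurveAux.rev_injOn (Δ.par_inj q)

lemma oriented_image_Icc {H : Multigraph} (Δ : Drawing H) (q : H.E) (A : H.V) :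
    oriented Δ q A '' Set.Icc 0 1 = Δ.par q '' Set.Icc 0 1 := by
  rcases oriented_cases Δ q A with h | h <;> rw [h]
  exact CurveAux.rev_image_Icc _

lemma oriented_image_Ioo {H : Multigraph} (Δ : Drawing H) (q : H.E) (A : H.V) :
    oriented Δ q A '' Set.Ioo 0 1 = Δ.par q '' Set.Ioo 0 1 := by
  rcases oriented_cases Δ q A with h | h <;> rw [h]
  exact CurveAux.rev_image_Ioo _

lemma oriented_endpoints {H : Multigraph} (Δ : Drawing H) (q : H.E) {A B : H.V}
    (hends : H.ends q = s(A, B)) (hAB : A ≠ B) :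
    oriented Δ q A 0 = Δ.vpos A ∧ oriented Δ q A 1 = Δ.vpos B := by
  obtain ⟨v, w, hvw, h0, h1⟩ := Δ.ends_match q
  rw [hends] at hvw
  rcases Sym2.eq_iff.mp hvw with ⟨hv, hw⟩ | ⟨hv, hw⟩
  · unfold oriented
    rw [if_pos (by rw [h0, hv])]
    exact ⟨by rw [h0, hv], by rw [h1, hw]⟩
  · unfold oriented
    rw [if_neg (fun hcon => hAB (Δ.vpos_inj (by rw [← hcon, h0, ← hw])))]
    exact ⟨by rw [CurveAux.rev_zero, h1, ← hv], by rw [CurveAux.rev_one, h0, ← hw]⟩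

def halfEdge {G : Multigraph} {l : ℕ} (e : Fin (2 * l) → G.E) (m : Fin (2 * l)) (u : G.V)
    (hu : u ∈ G.ends (e m)) : (G.multiCross l e).E :=
  Sum.inr ⟨(m, u), hu⟩

lemma halfEdge_ends {G : Multigraph} {l : ℕ} (e : Fin (2 * l) → G.E) (m : Fin (2 * l)) (u : G.V)
    (hu : u ∈ G.ends (e m)) :
    (G.multiCross l e).ends (halfEdge e m u hu) = s(Sum.inl u, Sum.inr (finHalf m)) := rfl

lemma halfEdge_inj {G : Multigraph} {l : ℕ} {e : Fin (2 * l) → G.E} {m m' : Fin (2 * l)}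
    {u u' : G.V} {hu : u ∈ G.ends (e m)} {hu' : u' ∈ G.ends (e m')}
    (h : halfEdge e m u hu = halfEdge e m' u' hu') : m = m' ∧ u = u' := by
  have h2 := congrArg Subtype.val (Sum.inr_injective h)
  exact ⟨congrArg Prod.fst h2, congrArg Prod.snd h2⟩

noncomputable def crossIdx {G : Multigraph} {l : ℕ} (e : Fin (2 * l) → G.E) (g : G.E)
    (h : ¬ ∀ i, g ≠ e i) : Fin (2 * l) :=
  (show ∃ i, g = e i by push_neg at h; exact h).choose

lemma crossIdx_spec {G : Multigraph} {l : ℕ} (e : Fin (2 * l) → G.E) (g : G.E)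
    (h : ¬ ∀ i, g ≠ e i) : g = e (crossIdx e g h) :=
  (show ∃ i, g = e i by push_neg at h; exact h).choose_spec

open Classical in
noncomputable def fwdPar {G : Multigraph} {l : ℕ} (e : Fin (2 * l) → G.E)
    (Δ' : Drawing (G.multiCross l e)) (g : G.E) : ℝ → ℝ × ℝ :=
  if h : ∀ i, g ≠ e i then Δ'.par (Sum.inl ⟨g, h⟩)
  else
    CurveAux.concat
      (oriented Δ' (halfEdge e (crossIdx e g h) (Quot.out (G.ends g)).1
          (by rw [← crossIdx_spec e g h]; exact sym2_out_fst_mem _))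
        (Sum.inl (Quot.out (G.ends g)).1))
      (oriented Δ' (halfEdge e (crossIdx e g h) (Quot.out (G.ends g)).2
          (by rw [← crossIdx_spec e g h]; exact sym2_out_snd_mem _))
        (Sum.inr (finHalf (crossIdx e g h))))

lemma fwdPar_pos {G : Multigraph} {l : ℕ} {e : Fin (2 * l) → G.E}
    (Δ' : Drawing (G.multiCross l e)) {g : G.E} (h : ∀ i, g ≠ e i) :
    fwdPar e Δ' g = Δ'.par (Sum.inl ⟨g, h⟩) := by
  rw [fwdPar, dif_pos h]

lemma fwdPar_neg {G : Multigraph} {l : ℕ} {e : Fin (2 * l) → G.E}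
    (Δ' : Drawing (G.multiCross l e)) {g : G.E} (h : ¬ ∀ i, g ≠ e i) :
    ∃ (m : Fin (2 * l)) (hm : g = e m),
      fwdPar e Δ' g = CurveAux.concat
        (oriented Δ' (halfEdge e m (Quot.out (G.ends g)).1
            (by rw [← hm]; exact sym2_out_fst_mem _)) (Sum.inl (Quot.out (G.ends g)).1))
        (oriented Δ' (halfEdge e m (Quot.out (G.ends g)).2
            (by rw [← hm]; exact sym2_out_snd_mem _)) (Sum.inr (finHalf m))) := by
  refine ⟨crossIdx e g h, crossIdx_spec e g h, ?_⟩
  rw [fwdPar, dif_neg h]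

open Set in
lemma forward_dir (k l : ℕ) (hlk : l ≤ k) (G : Multigraph) (e : Fin (2 * l) → G.E)
    (he : Function.Injective e) (Δ' : Drawing (G.multiCross l e)) (hpl : Δ'.crossings = ∅) :
    ∃ Δ : Drawing G, Δ.CrossingsAtMost k ∧
      ∀ g : G.E, {x | Δ.IsCrossing x ∧ x ∈ Δ.arc g}.Subsingleton := by
  classical
  have hαβ : ∀ g : G.E, (Quot.out (G.ends g)).1 ≠ (Quot.out (G.ends g)).2 :=
    fun g => sym2_out_ne _ (G.loopless g)
  have hgends : ∀ g : G.E, G.ends g = s((Quot.out (G.ends g)).1, (Quot.out (G.ends g)).2) :=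
    fun g => sym2_out_eq _
  have hdisj : ∀ (q q' : (G.multiCross l e).E), q ≠ q' → ∀ y : ℝ × ℝ,
      y ∈ Δ'.par q '' Set.Ioo 0 1 → y ∈ Δ'.par q' '' Set.Ioo 0 1 → False := by
    intro q q' hqq' y h1 h2
    have hd := Δ'.planar_interior_disjoint hpl hqq'
    rw [Set.eq_empty_iff_forall_notMem] at hd
    exact hd y ⟨h1, Set.image_mono Set.Ioo_subset_Icc_self h2⟩
  have hnotint : ∀ (z : (G.multiCross l e).V) (q : (G.multiCross l e).E),
      Δ'.vpos z ∉ Δ'.par q '' Set.Ioo 0 1 := fun z q => Δ'.vpos_not_interior z q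
  have hcrossed : ∀ (g : G.E), ¬ (∀ i, g ≠ e i) →
      ∃ (m : Fin (2 * l)) (qA qB : (G.multiCross l e).E),
        g = e m ∧
        (G.multiCross l e).ends qA =
          s(Sum.inl (Quot.out (G.ends g)).1, Sum.inr (finHalf m)) ∧
        (G.multiCross l e).ends qB =
          s(Sum.inl (Quot.out (G.ends g)).2, Sum.inr (finHalf m)) ∧
        qA ≠ qB ∧ multiU e qA = g ∧ multiU e qB = g ∧
        fwdPar e Δ' g '' Set.Icc 0 1 = Δ'.arc qA ∪ Δ'.arc qB ∧
        fwdPar e Δ' g '' Set.Ioo 0 1 =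
          Δ'.par qA '' Set.Ioo 0 1 ∪ {Δ'.vpos (Sum.inr (finHalf m))} ∪
            Δ'.par qB '' Set.Ioo 0 1 ∧
        fwdPar e Δ' g 0 = Δ'.vpos (Sum.inl (Quot.out (G.ends g)).1) ∧
        fwdPar e Δ' g 1 = Δ'.vpos (Sum.inl (Quot.out (G.ends g)).2) ∧
        ContinuousOn (fwdPar e Δ' g) (Set.Icc 0 1) ∧
        Set.InjOn (fwdPar e Δ' g) (Set.Icc 0 1) := by
    intro g h
    obtain ⟨m, hm, heq0⟩ := fwdPar_neg Δ' h
    have huA : (Quot.out (G.ends g)).1 ∈ G.ends (e m) := by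
      rw [← hm]; exact sym2_out_fst_mem _
    have huB : (Quot.out (G.ends g)).2 ∈ G.ends (e m) := by
      rw [← hm]; exact sym2_out_snd_mem _
    have heq : fwdPar e Δ' g = CurveAux.concat
        (oriented Δ' (halfEdge e m (Quot.out (G.ends g)).1 huA)
          (Sum.inl (Quot.out (G.ends g)).1))
        (oriented Δ' (halfEdge e m (Quot.out (G.ends g)).2 huB)
          (Sum.inr (finHalf m))) := heq0
    have hendsA := halfEdge_ends e m _ huA
    have hendsB := halfEdge_ends e m _ huB
    have hABv : (Sum.inl (Quot.out (G.ends g)).1 : (G.multiCross l e).V) ≠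
        Sum.inr (finHalf m) := by simp
    have hendsB' : (G.multiCross l e).ends (halfEdge e m _ huB) =
        s(Sum.inr (finHalf m), Sum.inl (Quot.out (G.ends g)).2) := by
      rw [hendsB]; exact Sym2.eq_swap
    have ocA := oriented_endpoints Δ' _ hendsA hABv
    have ocB := oriented_endpoints Δ' _ hendsB' (by exact Sum.inr_ne_inl)
    have hglue : oriented Δ' (halfEdge e m _ huA) (Sum.inl (Quot.out (G.ends g)).1) 1 =
        oriented Δ' (halfEdge e m _ huB) (Sum.inr (finHalf m)) 0 := ocA.2.trans ocB.1.symm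
    have hqAB : halfEdge e m (Quot.out (G.ends g)).1 huA ≠
        halfEdge e m (Quot.out (G.ends g)).2 huB :=
      fun hcon => hαβ g (halfEdge_inj hcon).2
    have hintAB : Δ'.arc (halfEdge e m _ huA) ∩ Δ'.arc (halfEdge e m _ huB) ⊆
        {oriented Δ' (halfEdge e m _ huA) (Sum.inl (Quot.out (G.ends g)).1) 1} := by
      rintro y ⟨hy1, hy2⟩
      obtain ⟨z, rfl, hz1, hz2⟩ := Δ'.planar_arc_inter hpl hqAB hy1 hy2
      erw [hendsA, Sym2.mem_iff] at hz1
      erw [hendsB, Sym2.mem_iff] at hz2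
      rcases hz1 with rfl | rfl
      · rcases hz2 with h2 | h2
        · exact absurd (Sum.inl_injective h2) (hαβ g)
        · exact absurd h2 (by simp)
      · rw [Set.mem_singleton_iff, ocA.2]
    refine ⟨m, halfEdge e m _ huA, halfEdge e m _ huB, hm, hendsA, hendsB, hqAB,
      hm.symm, hm.symm, ?_, ?_, ?_, ?_, ?_, ?_⟩
    · erw [heq, CurveAux.concat_image_Icc hglue, oriented_image_Icc, oriented_image_Icc]
      rfl
    · erw [heq, CurveAux.concat_image_Ioo, oriented_image_Ioo, oriented_image_Ioo, ocA.2]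
    · rw [heq, CurveAux.concat_zero]
      exact ocA.1
    · rw [heq, CurveAux.concat_one]
      exact ocB.2
    · rw [heq]
      exact CurveAux.concat_cont (oriented_cont _ _ _) (oriented_cont _ _ _) hglue
    · rw [heq]
      refine CurveAux.concat_injOn (oriented_injOn _ _ _) (oriented_injOn _ _ _) hglue ?_
      erw [oriented_image_Icc, oriented_image_Icc]
      exact hintAB
  have hcover : ∀ (g : G.E) (y : ℝ × ℝ), y ∈ fwdPar e Δ' g '' Set.Icc 0 1 →
      ∃ q : (G.multiCross l e).E, multiU e q = g ∧ y ∈ Δ'.arc q := by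
    intro g y hy
    by_cases h : ∀ i, g ≠ e i
    · rw [fwdPar_pos Δ' h] at hy
      exact ⟨Sum.inl ⟨g, h⟩, rfl, hy⟩
    · obtain ⟨m, qA, qB, hm, hendsA, hendsB, hABne, hUA, hUB, harc, hint, h₀, h₁,
        hcont, hinj⟩ := hcrossed g h
      rw [harc] at hy
      rcases hy with hy | hy
      · exact ⟨qA, hUA, hy⟩
      · exact ⟨qB, hUB, hy⟩
  have hends_inr : ∀ (q : (G.multiCross l e).E) (i : Fin l),
      (Sum.inr i : (G.multiCross l e).V) ∈ (G.multiCross l e).ends q →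
      ∃ m : Fin (2 * l), multiU e q = e m ∧ (m.val = 2 * i.val ∨ m.val = 2 * i.val + 1) := by
    rintro (g' | p) i hmem
    · exfalso
      obtain ⟨u, -, hu⟩ := Sym2.mem_map.mp hmem
      exact absurd hu (by simp)
    · have hmem' : (Sum.inr i : (G.multiCross l e).V) ∈
          s(Sum.inl p.val.2, (Sum.inr (finHalf p.val.1) : G.V ⊕ Fin l)) := hmem
      rcases Sym2.mem_iff.mp hmem' with hcon | hcon
      · exact absurd hcon (by simp)
      · have hieq : i = finHalf p.val.1 := Sum.inr_injective hcon
        refine ⟨p.val.1, rfl, ?_⟩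
        have h2 := p.val.1.isLt
        have h3 : i.val = p.val.1.val / 2 := by rw [hieq, finHalf_val]
        omega
  let ΔG : Drawing G :=
    { vpos := fun v => Δ'.vpos (Sum.inl v)
      par := fwdPar e Δ'
      par_cont := by
        intro g
        by_cases h : ∀ i, g ≠ e i
        · rw [fwdPar_pos Δ' h]
          exact Δ'.par_cont _
        · obtain ⟨m, qA, qB, hm, hendsA, hendsB, hABne, hUA, hUB, harc, hint, h₀, h₁,
            hcont, hinj⟩ := hcrossed g h
          exact hcont
      par_inj := by
        intro g
        by_cases h : ∀ i, g ≠ e i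
        · rw [fwdPar_pos Δ' h]
          exact Δ'.par_inj _
        · obtain ⟨m, qA, qB, hm, hendsA, hendsB, hABne, hUA, hUB, harc, hint, h₀, h₁,
            hcont, hinj⟩ := hcrossed g h
          exact hinj
      ends_match := by
        intro g
        by_cases h : ∀ i, g ≠ e i
        · obtain ⟨v, w, hvw, hv0, hv1⟩ := Δ'.ends_match (Sum.inl ⟨g, h⟩)
          have hvw' : Sym2.map Sum.inl (G.ends g) = s(v, w) := hvw
          rw [hgends g, Sym2.map_pair_eq] at hvw'
          rcases Sym2.eq_iff.mp hvw' with ⟨hv, hw⟩ | ⟨hv, hw⟩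
          · exact ⟨_, _, hgends g, by rw [fwdPar_pos Δ' h, hv0, ← hv],
              by rw [fwdPar_pos Δ' h, hv1, ← hw]⟩
          · refine ⟨(Quot.out (G.ends g)).2, (Quot.out (G.ends g)).1,
              (hgends g).trans Sym2.eq_swap, ?_, ?_⟩
            · rw [fwdPar_pos Δ' h, hv0, ← hw]
            · rw [fwdPar_pos Δ' h, hv1, ← hv]
        · obtain ⟨m, qA, qB, hm, hendsA, hendsB, hABne, hUA, hUB, harc, hint, h₀, h₁,
            hcont, hinj⟩ := hcrossed g h
          exact ⟨_, _, hgends g, h₀, h₁⟩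
      vpos_inj := fun v w h => Sum.inl_injective (Δ'.vpos_inj h)
      arcs_inter := by
        intro g g' hne
        by_cases h : ∀ i, g ≠ e i <;> by_cases h' : ∀ i, g' ≠ e i
        · rw [fwdPar_pos Δ' h, fwdPar_pos Δ' h']
          exact Δ'.arcs_inter _ _
            (fun hcon => hne ((congrArg (multiU e) hcon) : g = g'))
        · obtain ⟨m', qA', qB', hm', hendsA', hendsB', hABne', hUA', hUB', harc', hint',
            h₀', h₁', hcont', hinj'⟩ := hcrossed g' h'
          rw [fwdPar_pos Δ' h, hint']
          refine Set.subsingleton_empty.anti ?_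
          rintro y ⟨hy1, hy2⟩
          exfalso
          rcases hy2 with (hy2 | hy2) | hy2
          · exact hdisj (Sum.inl ⟨g, h⟩) qA'
              (fun hcon => hne ((congrArg (multiU e) hcon).trans hUA')) y hy1 hy2
          · rw [Set.mem_singleton_iff] at hy2
            exact hnotint _ _ (hy2 ▸ hy1)
          · exact hdisj (Sum.inl ⟨g, h⟩) qB'
              (fun hcon => hne ((congrArg (multiU e) hcon).trans hUB')) y hy1 hy2
        · obtain ⟨m, qA, qB, hm, hendsA, hendsB, hABne, hUA, hUB, harc, hint, h₀, h₁,
            hcont, hinj⟩ := hcrossed g h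
          rw [fwdPar_pos Δ' h', hint]
          refine Set.subsingleton_empty.anti ?_
          rintro y ⟨hy1, hy2⟩
          exfalso
          rcases hy1 with (hy1 | hy1) | hy1
          · exact hdisj (Sum.inl ⟨g', h'⟩) qA
              (fun hcon => hne.symm ((congrArg (multiU e) hcon).trans hUA)) y hy2 hy1
          · rw [Set.mem_singleton_iff] at hy1
            exact hnotint _ _ (hy1 ▸ hy2)
          · exact hdisj (Sum.inl ⟨g', h'⟩) qB
              (fun hcon => hne.symm ((congrArg (multiU e) hcon).trans hUB)) y hy2 hy1
        · obtain ⟨m, qA, qB, hm, hendsA, hendsB, hABne, hUA, hUB, harc, hint, h₀, h₁,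
            hcont, hinj⟩ := hcrossed g h
          obtain ⟨m', qA', qB', hm', hendsA', hendsB', hABne', hUA', hUB', harc', hint',
            h₀', h₁', hcont', hinj'⟩ := hcrossed g' h'
          rw [hint, hint']
          refine (Set.subsingleton_singleton (a := Δ'.vpos (Sum.inr (finHalf m)))).anti ?_
          rintro y ⟨hy1, hy2⟩
          have hnot2 : ∀ (q : (G.multiCross l e).E), multiU e q = g →
              y ∈ Δ'.par q '' Set.Ioo 0 1 → False := by
            intro q hUq hyq
            rcases hy2 with (hy2 | hy2) | hy2
            · exact hdisj q qA'
                (fun hcon => hne (hUq.symm.trans ((congrArg (multiU e) hcon).trans hUA'))) y hyq hy2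
            · rw [Set.mem_singleton_iff] at hy2
              exact hnotint _ _ (hy2 ▸ hyq)
            · exact hdisj q qB'
                (fun hcon => hne (hUq.symm.trans ((congrArg (multiU e) hcon).trans hUB'))) y hyq hy2
          rcases hy1 with (hy1 | hy1) | hy1
          · exact absurd hy1 (fun hc => hnot2 qA hUA hc)
          · exact hy1
          · exact absurd hy1 (fun hc => hnot2 qB hUB hc)
      vertex_on_arc := by
        intro g v hmem
        by_cases h : ∀ i, g ≠ e i
        · have hmem' : Δ'.vpos (Sum.inl v) ∈ Δ'.par (Sum.inl ⟨g, h⟩) '' Set.Icc 0 1 := by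
            rw [← fwdPar_pos Δ' h]; exact hmem
          obtain ⟨u, hu, huv⟩ := Sym2.mem_map.mp (Δ'.vertex_on_arc _ _ hmem')
          rwa [← Sum.inl_injective huv]
        · obtain ⟨m, qA, qB, hm, hendsA, hendsB, hABne, hUA, hUB, harc, hint, h₀, h₁,
            hcont, hinj⟩ := hcrossed g h
          have hmem' : Δ'.vpos (Sum.inl v) ∈ Δ'.arc qA ∪ Δ'.arc qB := by
            rw [← harc]; exact hmem
          rcases hmem' with hy | hy
          · have hz := Δ'.vertex_on_arc qA _ hy
            erw [hendsA, Sym2.mem_iff] at hz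
            rcases hz with hc | hc
            · rw [Sum.inl_injective hc]
              exact sym2_out_fst_mem _
            · exact absurd hc (by simp)
          · have hz := Δ'.vertex_on_arc qB _ hy
            erw [hendsB, Sym2.mem_iff] at hz
            rcases hz with hc | hc
            · rw [Sum.inl_injective hc]
              exact sym2_out_snd_mem _
            · exact absurd hc (by simp)
      at_most_two := by
        intro y hy g₁ g₂ g₃ h₁ h₂ h₃
        obtain ⟨q₁, hU₁, hq₁⟩ := hcover g₁ y h₁
        obtain ⟨q₂, hU₂, hq₂⟩ := hcover g₂ y h₂
        obtain ⟨q₃, hU₃, hq₃⟩ := hcover g₃ y h₃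
        by_cases hr : y ∈ Set.range Δ'.vpos
        · obtain ⟨z, hz⟩ := hr
          rcases z with v | i
          · exact absurd ⟨v, hz⟩ hy
          · subst hz
            obtain ⟨m₁, hm₁, hd₁⟩ := hends_inr q₁ i (Δ'.vertex_on_arc q₁ _ hq₁)
            obtain ⟨m₂, hm₂, hd₂⟩ := hends_inr q₂ i (Δ'.vertex_on_arc q₂ _ hq₂)
            obtain ⟨m₃, hm₃, hd₃⟩ := hends_inr q₃ i (Δ'.vertex_on_arc q₃ _ hq₃)
            rw [hU₁] at hm₁
            rw [hU₂] at hm₂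
            rw [hU₃] at hm₃
            have hval : m₁.val = m₂.val ∨ m₁.val = m₃.val ∨ m₂.val = m₃.val := by omega
            rcases hval with hc | hc | hc
            · exact Or.inl (by rw [hm₁, hm₂]; exact congrArg e (Fin.ext hc))
            · exact Or.inr (Or.inl (by rw [hm₁, hm₃]; exact congrArg e (Fin.ext hc)))
            · exact Or.inr (Or.inr (by rw [hm₂, hm₃]; exact congrArg e (Fin.ext hc)))
        · rcases Δ'.at_most_two y hr q₁ q₂ q₃ hq₁ hq₂ hq₃ with hc | hc | hc
          · exact Or.inl (by rw [← hU₁, ← hU₂, hc])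
          · exact Or.inr (Or.inl (by rw [← hU₁, ← hU₃, hc]))
          · exact Or.inr (Or.inr (by rw [← hU₂, ← hU₃, hc])) }
  have huniqv : ∀ (g : G.E) (i i' : Fin l),
      Δ'.vpos (Sum.inr i) ∈ fwdPar e Δ' g '' Set.Icc 0 1 →
      Δ'.vpos (Sum.inr i') ∈ fwdPar e Δ' g '' Set.Icc 0 1 → i = i' := by
    intro g i i' hmem hmem'
    by_cases h : ∀ j, g ≠ e j
    · exfalso
      have hmem2 : Δ'.vpos (Sum.inr i) ∈ Δ'.par (Sum.inl ⟨g, h⟩) '' Set.Icc 0 1 := by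
        rw [← fwdPar_pos Δ' h]; exact hmem
      obtain ⟨u, -, hu⟩ := Sym2.mem_map.mp (Δ'.vertex_on_arc _ _ hmem2)
      exact absurd hu (by simp)
    · obtain ⟨m, qA, qB, hm, hendsA, hendsB, hABne, hUA, hUB, harc, hint, h₀, h₁,
        hcont, hinj⟩ := hcrossed g h
      have key : ∀ j : Fin l, Δ'.vpos (Sum.inr j) ∈ fwdPar e Δ' g '' Set.Icc 0 1 →
          j = finHalf m := by
        intro j hj
        rw [harc] at hj
        rcases hj with hy | hy
        · have hz := Δ'.vertex_on_arc qA _ hy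
          erw [hendsA, Sym2.mem_iff] at hz
          rcases hz with hc | hc
          · exact absurd hc (by simp)
          · exact Sum.inr_injective hc
        · have hz := Δ'.vertex_on_arc qB _ hy
          erw [hendsB, Sym2.mem_iff] at hz
          rcases hz with hc | hc
          · exact absurd hc (by simp)
          · exact Sum.inr_injective hc
      rw [key i hmem, key i' hmem']
  have hcsub : ΔG.crossings ⊆ Set.range (fun i : Fin l => Δ'.vpos (Sum.inr i)) := by
    rintro y ⟨hy, g, g', hgg', hyg, hyg'⟩
    obtain ⟨q, hUq, hq⟩ := hcover g y hyg
    obtain ⟨q', hUq', hq'⟩ := hcover g' y hyg'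
    have hqq' : q ≠ q' := fun hcon => hgg' ((hUq.symm.trans (congrArg (multiU e) hcon)).trans hUq')
    by_cases hr : y ∈ Set.range Δ'.vpos
    · obtain ⟨z, hz⟩ := hr
      rcases z with v | i
      · exact absurd ⟨v, hz⟩ hy
      · exact ⟨i, hz⟩
    · exfalso
      have hyc : y ∈ Δ'.crossings := ⟨hr, q, q', hqq', hq, hq'⟩
      rw [hpl] at hyc
      exact hyc
  refine ⟨ΔG, ⟨(Set.finite_range _).subset hcsub, ?_⟩, ?_⟩
  · refine le_trans (Set.ncard_le_ncard hcsub (Set.finite_range _)) (le_trans ?_ hlk)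
    rw [← Set.image_univ]
    refine le_trans (Set.ncard_image_le Set.finite_univ) ?_
    rw [Set.ncard_univ, Nat.card_eq_fintype_card, Fintype.card_fin]
  · intro g y₀ hy₀ y₁ hy₁
    obtain ⟨i, hi0⟩ := hcsub hy₀.1
    obtain ⟨i', hi0'⟩ := hcsub hy₁.1
    have hi : Δ'.vpos (Sum.inr i) = y₀ := hi0
    have hi' : Δ'.vpos (Sum.inr i') = y₁ := hi0'
    rw [← hi, ← hi']
    exact congrArg _ (congrArg Sum.inr
      (huniqv g i i' (by rw [hi]; exact hy₀.2) (by rw [hi']; exact hy₁.2)))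

/-- For `k ≥ 0`: there are an `l ≤ k` and pairwise distinct edges
`e 0, …, e (2l - 1)` of `G` such that the graph `G^{×ē}` obtained by successively
crossing `e 0` with `e 1`, …, `e (2l-2)` with `e (2l-1)` is planar iff `G` has a
drawing with at most `k` crossings in which every edge is involved in at most one
crossing. -/
theorem multiCross_planar_iff_drawing (k : ℕ) (G : Multigraph) :
    (∃ l : ℕ, l ≤ k ∧ ∃ e : Fin (2 * l) → G.E,
      Function.Injective e ∧ (G.multiCross l e).IsPlanar) ↔
    ∃ Δ : Drawing G, Δ.CrossingsAtMost k ∧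
      ∀ e : G.E, {x | Δ.IsCrossing x ∧ x ∈ Δ.arc e}.Subsingleton := by
  constructor
  · rintro ⟨l, hlk, e, he, Δ', hpl⟩
    exact forward_dir k l hlk G e he Δ' hpl
  · rintro ⟨Δ, h1, h2⟩
    exact backward_dir k G Δ h1 h2
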